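/- arXiv:1011.5530 — 6 statements merged into one kernel-verified Lean document; each statement's English description precedes it below -/
import Mathlib

section
/- Let K and L be finite lattice-convex subsets of ℤ² whose affine hulls are all of ℝ², and suppose g_K = g_L. Then m'(K) = m'(L), m''(K) = m''(L), m(K) = m(L), U(K) ∪ U(−K) = U(L) ∪ U(−L), and δ(K) = δ(L). -/
open scoped Pointwise ENNReal

noncomputable section

abbrev Z2 : Type := ℤ × ℤ
abbrev R2 : Type := ℝ × ℝ

/-- The canonical embedding of `ℤ²` into `ℝ²`. -/
def toR (p : Z2) : R2 := ((p.1 : ℝ), (p.2 : ℝ))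

/-- The standard scalar product on `ℝ²`. -/
def dotR (x y : R2) : ℝ := x.1 * y.1 + x.2 * y.2

/-- The covariogram of a set `K ⊆ ℤ²`: `u ↦ |K ∩ (K + u)|`. -/
def cov (K : Set Z2) (u : Z2) : ℕ := (K ∩ ((fun x => x + u) '' K)).ncard

/-- `K ⊆ ℤ²` is lattice-convex if it is the intersection of `ℤ²` with a convex set. -/
def latticeConvex (K : Set Z2) : Prop := ∃ C : Set R2, Convex ℝ C ∧ K = toR ⁻¹' C

/-- The affine hull of `K` is all of `ℝ²`. -/
def spans (K : Set Z2) : Prop := affineSpan ℝ (toR '' K) = ⊤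

/-- `L ∈ [K]`: `L` is a translate of `K` or a translate of `−K`. -/
def sameClass (K L : Set Z2) : Prop :=
  ∃ t : Z2, L = (fun x => x + t) '' K ∨ L = (fun x => t - x) '' K

/-- The support set `F(K,u)` of `K` in direction `u ∈ ℝ²`. -/
def suppSet (K : Set Z2) (u : R2) : Set Z2 :=
  {x ∈ K | ∀ y ∈ K, dotR (toR y) u ≤ dotR (toR x) u}

/-- A vector of `ℤ²` is primitive if the gcd of its coordinates is `1`. -/
def primitive (u : Z2) : Prop := Int.gcd u.1 u.2 = 1

/-- `u ≠ 0` is an outer normal of an edge of `K` if `F(K,u)` has more than one point. -/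
def isEdge (K : Set Z2) (u : Z2) : Prop := u ≠ 0 ∧ 1 < (suppSet K (toR u)).ncard

/-- `U(K)`: primitive outer normals of edges of `K`. -/
def normals (K : Set Z2) : Set Z2 := {u | primitive u ∧ isEdge K u}

/-- `−K`. -/
def negSet (K : Set Z2) : Set Z2 := (fun x => -x) '' K

/-- `m'(K) = min {|F(K,u)| : u ∈ U(K)}` (with `min ∅ = ∞`). -/
def mOne (K : Set Z2) : ℝ≥0∞ := ⨅ u ∈ normals K, ((suppSet K (toR u)).ncard : ℝ≥0∞)

/-- `m''(K) = min {|F(K,u)| − |F(K,−u)| + 1 : u ≠ 0, |F(K,u)| > |F(K,−u)| > 1}`. -/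
def mTwo (K : Set Z2) : ℝ≥0∞ :=
  ⨅ u ∈ {u : Z2 | u ≠ 0 ∧ 1 < (suppSet K (toR (-u))).ncard ∧
      (suppSet K (toR (-u))).ncard < (suppSet K (toR u)).ncard},
    (((suppSet K (toR u)).ncard - (suppSet K (toR (-u))).ncard + 1 : ℕ) : ℝ≥0∞)

/-- `m(K) = min {m'(K), m''(K)}`. -/
def mm (K : Set Z2) : ℝ≥0∞ := min (mOne K) (mTwo K)

/-- Determinant of the 2×2 matrix with columns `u`, `v`. -/
def detZ (u v : Z2) : ℤ := u.1 * v.2 - u.2 * v.1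

/-- `D(U) = {|det(u₁,u₂)| : u₁, u₂ ∈ U} \ {0}`. -/
def Dset (U : Set Z2) : Set ℝ≥0∞ :=
  {d | d ≠ 0 ∧ ∃ u ∈ U, ∃ v ∈ U, d = ((detZ u v).natAbs : ℝ≥0∞)}

/-- The discrepancy `δ(U) = max D(U) / min D(U)`. -/
def disc (U : Set Z2) : ℝ≥0∞ := sSup (Dset U) / sInf (Dset U)

/-- `δ(K) = δ(U(K))`. -/
def discK (K : Set Z2) : ℝ≥0∞ := disc (normals K)

/-- Two vectors of `ℝ²` are parallel (linearly dependent). -/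
def Parallel2 (x w : R2) : Prop := x.1 * w.2 = x.2 * w.1

/-- Two vectors of `ℤ²` are parallel (linearly dependent). -/
def ParallelZ (u v : Z2) : Prop := u.1 * v.2 = u.2 * v.1

/-- A polyhedron in `ℝ²`: an intersection of finitely many closed halfplanes. -/
def IsPolyhedron (P : Set R2) : Prop :=
  ∃ H : Finset (R2 × ℝ), P = ⋂ h ∈ H, {x : R2 | dotR x h.1 ≤ h.2}

/-- `E` is an edge (one-dimensional face) of the polyhedron `P`:
a convex extreme subset of `P` with at least two points that is contained in a line. -/
def IsPolyEdge (P E : Set R2) : Prop :=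
  IsExtreme ℝ P E ∧ Convex ℝ E ∧ (∃ p ∈ E, ∃ q ∈ E, p ≠ q) ∧
    ∃ a d : R2, ∀ x ∈ E, ∃ t : ℝ, x = a + t • d

/-- Every edge of `P` is parallel to some vector of `W`. -/
def edgesParallelTo (P : Set R2) (W : Set Z2) : Prop :=
  ∀ E : Set R2, IsPolyEdge P E → ∃ w ∈ W, ∀ p ∈ E, ∀ q ∈ E, Parallel2 (p - q) (toR w)

/-- `u` is parallel to an edge of the convex hull of `K`. -/
def parEdgeHull (K : Set Z2) (u : Z2) : Prop :=
  ∃ E : Set R2, IsPolyEdge (convexHull ℝ (toR '' K)) E ∧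
    ∀ p ∈ E, ∀ q ∈ E, Parallel2 (p - q) (toR u)

/-- The conical hull of a set in `ℝ²`. -/
def coneHull (s : Set R2) : Set R2 :=
  {x | ∃ c : ℝ, 0 ≤ c ∧ ∃ y ∈ convexHull ℝ s, x = c • y}

/-- The supporting cone `S(K,v) = cone (K − v)`. -/
def suppCone (K : Set Z2) (v : Z2) : Set R2 :=
  coneHull ((fun x => toR x - toR v) '' K)

/-- `v` is a vertex of `K`: a support set of `K` consisting of exactly one point. -/
def isVertex (K : Set Z2) (v : Z2) : Prop := ∃ u : R2, u ≠ 0 ∧ suppSet K u = {v}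

/-- A set is centrally symmetric if it is a translate of its reflection. -/
def centSym (A : Set Z2) : Prop := ∃ t : Z2, A = (fun x => t - x) '' A

/-- The Minkowski sum of `S` and `T` is direct. -/
def directSum (S T : Set Z2) : Prop :=
  ∀ s ∈ S, ∀ s' ∈ S, ∀ t ∈ T, ∀ t' ∈ T, s + t = s' + t' → s = s' ∧ t = t'

/-- `T₁ = {0,…,k} × {0}`. -/
def T1set (k : ℤ) : Set Z2 := {p | 0 ≤ p.1 ∧ p.1 ≤ k ∧ p.2 = 0}

/-- `T₂ = {0,…,ℓ} × {1}`. -/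
def T2set (l : ℤ) : Set Z2 := {p | 0 ≤ p.1 ∧ p.1 ≤ l ∧ p.2 = 1}

/-- `T = ({0,…,k} × {0}) ∪ ({0,…,ℓ} × {1})`. -/
def Tset (k l : ℤ) : Set Z2 := T1set k ∪ T2set l

def wOne (k : ℤ) : Z2 := (-k - 1, 1)
def wTwo (l : ℤ) : Z2 := (l + 1, 1)

/-- The lattice `𝕃 = ℤw₁ + ℤw₂`. -/
def ZLat (k l : ℤ) : Set Z2 := {p | ∃ a b : ℤ, p = a • wOne k + b • wTwo l}

/-- `S` is lattice-convex with respect to the lattice `Λ`. -/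
def latticeConvexIn (Λ S : Set Z2) : Prop := ∃ C : Set R2, Convex ℝ C ∧ S = Λ ∩ toR ⁻¹' C

/-- The translate `s + A`. -/
def transl (s : Z2) (A : Set Z2) : Set Z2 := (fun x => s + x) '' A

/-- The horizontal section `I_h` of `K` at height `h`. -/
def sect (K : Set Z2) (h : ℤ) : Set Z2 := {p ∈ K | p.2 = h}

/-- `𝒯(h)`: the members of `𝒯₁ ∪ 𝒯₂` contained in `I_h`. -/
def TcalSet (k l : ℤ) (S : Set Z2) (h : ℤ) : Set (Set Z2) :=
  {J | (∃ s ∈ S, J = transl s (T1set k) ∨ J = transl s (T2set l)) ∧ J ⊆ sect (S + Tset k l) h}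

/-- `J` strictly precedes `J'` in the left-to-right order. -/
def precedes (J J' : Set Z2) : Prop := ∀ p ∈ J, ∀ q ∈ J', p.1 < q.1

/-- Adjacency in the graph `G_S`. -/
def adjStep (k l : ℤ) (S : Set Z2) (a b : Z2) : Prop :=
  a ∈ S ∧ b ∈ S ∧
    (b - a = wOne k ∨ b - a = -(wOne k) ∨ b - a = wTwo l ∨ b - a = -(wTwo l) ∨
      (k = l + 1 ∧ (b - a = wOne k + wTwo l ∨ b - a = -(wOne k + wTwo l))))

/-- The graph `G_S` is connected. -/
def GConnected (k l : ℤ) (S : Set Z2) : Prop :=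
  ∀ s ∈ S, ∀ s' ∈ S, Relation.ReflTransGen (adjStep k l S) s s'

end

noncomputable section AuxCov

-- integer dot product
def dotZ (x u : Z2) : ℤ := x.1 * u.1 + x.2 * u.2

lemma dotR_toR (x u : Z2) : dotR (toR x) (toR u) = (dotZ x u : ℝ) := by
  simp [dotR, toR, dotZ]

lemma suppSet_int (K : Set Z2) (u : Z2) :
    suppSet K (toR u) = {x ∈ K | ∀ y ∈ K, dotZ y u ≤ dotZ x u} := by
  ext x
  simp only [suppSet, Set.mem_setOf_eq, dotR_toR, Int.cast_le]

lemma dotZ_sub (x y u : Z2) : dotZ (x - y) u = dotZ x u - dotZ y u := by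
  simp [dotZ, Prod.sub_def]; ring

lemma dotZ_add (x y u : Z2) : dotZ (x + y) u = dotZ x u + dotZ y u := by
  simp [dotZ, Prod.add_def]; ring

lemma dotZ_neg_right (x u : Z2) : dotZ x (-u) = - dotZ x u := by
  simp [dotZ]; ring

lemma dotZ_smul (t : ℤ) (e u : Z2) : dotZ (t • e) u = t * dotZ e u := by
  simp [dotZ, Prod.smul_def, smul_eq_mul]; ring

lemma toR_lin (p e : Z2) (t : ℤ) : toR (p + t • e) = toR p + (t : ℝ) • toR e := by
  simp [toR, Prod.ext_iff, Prod.add_def, Prod.smul_def, smul_eq_mul]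

/-- Lattice points orthogonal to `u` are multiples of a single vector. -/
lemma line_structure (u : Z2) (hu : u ≠ 0) :
    ∃ e : Z2, e ≠ 0 ∧ dotZ e u = 0 ∧ ∀ w : Z2, dotZ w u = 0 → ∃ t : ℤ, w = t • e := by
  set g : ℤ := (Int.gcd u.1 u.2 : ℤ) with hg
  have hgcd0 : Int.gcd u.1 u.2 ≠ 0 := by
    intro h
    exact hu (Prod.ext (Int.natAbs_eq_zero.1 (Nat.eq_zero_of_gcd_eq_zero_left h))
      (Int.natAbs_eq_zero.1 (Nat.eq_zero_of_gcd_eq_zero_right h)))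
  have hgpos : 0 < g := by positivity
  obtain ⟨a1, h1⟩ : g ∣ u.1 := Int.gcd_dvd_left _ _
  obtain ⟨a2, h2⟩ : g ∣ u.2 := Int.gcd_dvd_right _ _
  have hcop : IsCoprime a1 a2 := by
    rw [Int.isCoprime_iff_gcd_eq_one]
    have hG : Int.gcd u.1 u.2 = Int.gcd u.1 u.2 * Int.gcd a1 a2 := by
      nth_rewrite 1 [h1, h2]
      rw [Int.gcd_mul_left]
      simp [hg]
    have h1' : Int.gcd u.1 u.2 * Int.gcd a1 a2 = Int.gcd u.1 u.2 * 1 := by omega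
    exact (Nat.eq_of_mul_eq_mul_left (Nat.pos_of_ne_zero hgcd0) h1')
  obtain ⟨x, y, hxy⟩ := hcop
  refine ⟨(-a2, a1), ?_, by simp [dotZ, h1, h2]; ring, ?_⟩
  · intro h
    have h' : a2 = 0 ∧ a1 = 0 := by simpa [Prod.ext_iff, neg_eq_zero] using h
    exact hu (Prod.ext (by simp [h1, h'.2]) (by simp [h2, h'.1]))
  · intro w hw
    have hw2 : g * (w.1 * a1 + w.2 * a2) = g * 0 := by
      have hw3 : w.1 * (g * a1) + w.2 * (g * a2) = 0 := by
        rw [← h1, ← h2]; simpa [dotZ] using hw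
      linear_combination hw3
    have hw' : w.1 * a1 + w.2 * a2 = 0 := mul_left_cancel₀ (ne_of_gt hgpos) hw2
    refine ⟨x * w.2 - y * w.1, Prod.ext ?_ ?_⟩
    · show w.1 = (x * w.2 - y * w.1) * (-a2)
      linear_combination x * hw' - w.1 * hxy
    · show w.2 = (x * w.2 - y * w.1) * a1
      linear_combination y * hw' - w.2 * hxy

lemma smul_e_inj {e : Z2} (he : e ≠ 0) : Function.Injective (fun t : ℤ => t • e) := by
  intro s t hst
  simp only [Prod.smul_def, smul_eq_mul, Prod.ext_iff] at hst
  have h1 : e.1 ≠ 0 ∨ e.2 ≠ 0 := by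
    by_contra h
    push_neg at h
    exact he (Prod.ext h.1 h.2)
  rcases h1 with h | h
  · exact mul_right_cancel₀ h hst.1
  · exact mul_right_cancel₀ h hst.2

lemma prog_inj (p : Z2) {e : Z2} (he : e ≠ 0) :
    Function.Injective (fun t : ℤ => p + t • e) := by
  intro s t hst
  exact smul_e_inj he (by simpa using hst)

lemma ncard_Icc_int (a b : ℤ) : (Set.Icc a b).ncard = (b + 1 - a).toNat := by
  rw [← Finset.coe_Icc, Set.ncard_coe_finset, Int.card_Icc]

lemma ncard_progression (p : Z2) {e : Z2} (he : e ≠ 0) (a b : ℤ) :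
    ((fun t : ℤ => p + t • e) '' Set.Icc a b).ncard = (b + 1 - a).toNat := by
  rw [Set.ncard_image_of_injective _ (prog_inj p he), ncard_Icc_int]

lemma suppSet_nonempty {K : Set Z2} (hfin : K.Finite) (hne : K.Nonempty) (u : Z2) :
    (suppSet K (toR u)).Nonempty := by
  obtain ⟨x, hx, hmax⟩ := hfin.toFinset.exists_max_image (fun x => dotZ x u)
    (by simpa [Set.Finite.toFinset_nonempty] using hne)
  refine ⟨x, ?_⟩
  rw [suppSet_int]
  exact ⟨hfin.mem_toFinset.1 hx, fun y hy => hmax y (hfin.mem_toFinset.2 hy)⟩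

lemma suppSet_level {K : Set Z2} {u : Z2} {p : Z2} (hp : p ∈ suppSet K (toR u)) :
    suppSet K (toR u) = {x ∈ K | dotZ x u = dotZ p u} := by
  rw [suppSet_int] at hp ⊢
  ext x
  constructor
  · rintro ⟨hxK, hx⟩
    exact ⟨hxK, le_antisymm (hp.2 x hxK) (hx p hp.1)⟩
  · rintro ⟨hxK, hx⟩
    exact ⟨hxK, fun y hy => hx ▸ hp.2 y hy⟩

lemma suppSet_subset (K : Set Z2) (u : R2) : suppSet K u ⊆ K := fun _ h => h.1

/-- An integer between two members of an "interval-closed" set description via convexity. -/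
lemma mem_K_of_between {K : Set Z2} (hconv : latticeConvex K) {x0 e : Z2} {t1 t t2 : ℤ}
    (h1 : x0 + t1 • e ∈ K) (h2 : x0 + t2 • e ∈ K) (hl : t1 ≤ t) (hr : t ≤ t2) :
    x0 + t • e ∈ K := by
  obtain ⟨C, hC, hKC⟩ := hconv
  rcases eq_or_lt_of_le (hl.trans hr) with h | hlt
  · have : t = t1 := le_antisymm (h ▸ hr) hl
    rwa [this]
  · have hd : (0:ℝ) < (t2 - t1 : ℤ) := by exact_mod_cast sub_pos.2 hlt
    set lam : ℝ := ((t2 - t : ℤ) : ℝ) / ((t2 - t1 : ℤ) : ℝ) with hlam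
    set mu : ℝ := ((t - t1 : ℤ) : ℝ) / ((t2 - t1 : ℤ) : ℝ) with hmu
    have hlam0 : 0 ≤ lam := by
      apply div_nonneg _ hd.le
      exact_mod_cast sub_nonneg.2 hr
    have hmu0 : 0 ≤ mu := by
      apply div_nonneg _ hd.le
      exact_mod_cast sub_nonneg.2 hl
    have hsum : lam + mu = 1 := by
      rw [hlam, hmu, ← add_div, div_eq_one_iff_eq hd.ne']
      push_cast; ring
    have hP1 : toR (x0 + t1 • e) ∈ C := by rw [hKC] at h1; exact h1
    have hP2 : toR (x0 + t2 • e) ∈ C := by rw [hKC] at h2; exact h2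
    have hmem := hC hP1 hP2 hlam0 hmu0 hsum
    rw [hKC]
    show toR (x0 + t • e) ∈ C
    convert hmem using 1
    rw [toR_lin, toR_lin, toR_lin]
    have hco : lam * t1 + mu * t2 = (t : ℝ) := by
      rw [hlam, hmu, div_mul_eq_mul_div, div_mul_eq_mul_div, ← add_div,
        div_eq_iff hd.ne']
      push_cast; ring
    apply Prod.ext <;>
      simp only [Prod.add_def, Prod.smul_def, smul_eq_mul]
    · linear_combination (-(toR x0).1) * hsum - (toR e).1 * hco
    · linear_combination (-(toR x0).2) * hsum - (toR e).2 * hco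

/-- Support sets of finite lattice-convex sets are arithmetic progressions. -/
lemma suppSet_progression {K : Set Z2} (hfin : K.Finite) (hconv : latticeConvex K)
    (hne : K.Nonempty) {u e : Z2}
    (he0 : e ≠ 0) (heu : dotZ e u = 0) (hsp : ∀ w : Z2, dotZ w u = 0 → ∃ t : ℤ, w = t • e) :
    ∃ (p : Z2) (n : ℤ), 0 ≤ n ∧
      suppSet K (toR u) = (fun t : ℤ => p + t • e) '' Set.Icc 0 n := by
  obtain ⟨x0, hx0⟩ := suppSet_nonempty hfin hne u
  have hlevel := suppSet_level hx0
  -- every element of F is x0 + t e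
  have hrep : ∀ x ∈ suppSet K (toR u), ∃ t : ℤ, x = x0 + t • e := by
    intro x hx
    rw [hlevel] at hx
    obtain ⟨t, ht⟩ := hsp (x - x0) (by rw [dotZ_sub, hx.2, sub_self])
    exact ⟨t, by rw [← ht]; abel⟩
  -- the parameter set
  set T : Set ℤ := {t : ℤ | x0 + t • e ∈ suppSet K (toR u)} with hT
  have hTfin : T.Finite := by
    exact Set.Finite.preimage (prog_inj x0 he0).injOn (hfin.subset (suppSet_subset K (toR u)))
  have hT0 : (0:ℤ) ∈ T := by simpa [hT] using hx0
  have hTne : T.Nonempty := ⟨0, hT0⟩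
  -- T is an interval
  have hTmem : ∀ t : ℤ, t ∈ T ↔ x0 + t • e ∈ K ∧ dotZ (x0 + t • e) u = dotZ x0 u := by
    intro t
    rw [hT, Set.mem_setOf_eq, hlevel]
    rfl
  have hTint : ∀ t1 ∈ T, ∀ t2 ∈ T, ∀ t : ℤ, t1 ≤ t → t ≤ t2 → t ∈ T := by
    intro t1 h1 t2 h2 t hl hr
    rw [hTmem] at h1 h2 ⊢
    refine ⟨mem_K_of_between hconv h1.1 h2.1 hl hr, ?_⟩
    rw [dotZ_add, dotZ_smul, heu, mul_zero, add_zero]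
  -- T = Icc min max
  set t1 := hTfin.toFinset.min' (by simpa using hTne) with ht1
  set t2 := hTfin.toFinset.max' (by simpa using hTne) with ht2
  have ht1T : t1 ∈ T := by
    have := hTfin.toFinset.min'_mem (by simpa using hTne)
    simpa using this
  have ht2T : t2 ∈ T := by
    have := hTfin.toFinset.max'_mem (by simpa using hTne)
    simpa using this
  have hTeq : T = Set.Icc t1 t2 := by
    ext t
    constructor
    · intro ht
      exact ⟨hTfin.toFinset.min'_le t (hTfin.mem_toFinset.2 ht),
        hTfin.toFinset.le_max' t (hTfin.mem_toFinset.2 ht)⟩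
    · rintro ⟨hl, hr⟩
      exact hTint t1 ht1T t2 ht2T t hl hr
  refine ⟨x0 + t1 • e, t2 - t1, ?_, ?_⟩
  · have : t1 ≤ t2 := hTfin.toFinset.min'_le t2 (hTfin.mem_toFinset.2 ht2T)
    omega
  · ext x
    constructor
    · intro hx
      obtain ⟨t, ht⟩ := hrep x hx
      have htT : t ∈ T := by rw [hT, Set.mem_setOf_eq, ← ht]; exact hx
      rw [hTeq] at htT
      obtain ⟨hl', hr'⟩ := Set.mem_Icc.1 htT
      refine ⟨t - t1, Set.mem_Icc.2 ⟨by omega, by omega⟩, ?_⟩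
      show x0 + t1 • e + (t - t1) • e = x
      rw [ht, add_assoc, ← add_smul]
      have hst : t1 + (t - t1) = t := by ring
      rw [hst]
    · rintro ⟨s, ⟨hs0, hs1⟩, rfl⟩
      have : t1 + s ∈ T := by
        rw [hTeq]
        exact ⟨by omega, by omega⟩
      have hmem : x0 + (t1 + s) • e ∈ suppSet K (toR u) := this
      show x0 + t1 • e + s • e ∈ suppSet K (toR u)
      rw [add_assoc, ← add_smul]
      exact hmem

def Scov (g : Z2 → ℕ) (u : Z2) : Set Z2 :=
  {v | 0 < g v ∧ ∀ w, 0 < g w → dotZ w u ≤ dotZ v u}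

def Mx (g : Z2 → ℕ) (u : Z2) : ℕ := sSup (g '' Scov g u)

lemma cov_pos_iff {K : Set Z2} (hfin : K.Finite) (v : Z2) :
    0 < cov K v ↔ ∃ x ∈ K, ∃ y ∈ K, v = x - y := by
  rw [cov, Set.ncard_pos (hfin.inter_of_left _)]
  constructor
  · rintro ⟨x, hxK, y, hyK, hyx⟩
    replace hyx : y + v = x := hyx
    exact ⟨x, hxK, y, hyK, eq_sub_of_add_eq (by rw [add_comm]; exact hyx)⟩
  · rintro ⟨x, hxK, y, hyK, rfl⟩
    refine ⟨x, hxK, y, hyK, ?_⟩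
    show y + (x - y) = x
    rw [add_comm, sub_add_cancel]

lemma spans_nonempty {K : Set Z2} (h : spans K) : K.Nonempty := by
  have h2 : (toR '' K).Nonempty := by
    rw [← affineSpan_nonempty (k := ℝ)]
    rw [h]
    exact ⟨0, trivial⟩
  obtain ⟨_, x, hx, _⟩ := h2
  exact ⟨x, hx⟩

/-- The key counting lemma. -/
lemma key_lemma {K : Set Z2} (hfin : K.Finite) (hconv : latticeConvex K)
    (hne : K.Nonempty) {u : Z2} (hu : u ≠ 0) :
    (Scov (cov K) u).ncard + 1
        = (suppSet K (toR u)).ncard + (suppSet K (toR (-u))).ncard ∧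
      Mx (cov K) u = min (suppSet K (toR u)).ncard (suppSet K (toR (-u))).ncard := by
  obtain ⟨e, he0, heu, hsp⟩ := line_structure u hu
  obtain ⟨p, n, hn0, hFu⟩ := suppSet_progression hfin hconv hne he0 heu hsp
  have heu' : dotZ e (-u) = 0 := by rw [dotZ_neg_right, heu, neg_zero]
  have hsp' : ∀ w : Z2, dotZ w (-u) = 0 → ∃ t : ℤ, w = t • e := by
    intro w hw
    exact hsp w (by rw [dotZ_neg_right] at hw; omega)
  obtain ⟨q, m, hm0, hFv⟩ := suppSet_progression hfin hconv hne he0 heu' hsp'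
  -- basic membership facts
  have hprogmem : ∀ t ∈ Set.Icc (0:ℤ) n, p + t • e ∈ suppSet K (toR u) := by
    intro t ht; rw [hFu]; exact ⟨t, ht, rfl⟩
  have hprogmem' : ∀ t ∈ Set.Icc (0:ℤ) m, q + t • e ∈ suppSet K (toR (-u)) := by
    intro t ht; rw [hFv]; exact ⟨t, ht, rfl⟩
  have hp : p ∈ suppSet K (toR u) := by
    have := hprogmem 0 (by simp [hn0])
    simpa using this
  have hq : q ∈ suppSet K (toR (-u)) := by
    have := hprogmem' 0 (by simp [hm0])
    simpa using this
  have hpK : p ∈ K := hp.1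
  have hqK : q ∈ K := hq.1
  have hpint := (suppSet_int K u) ▸ hp
  have hqint := (suppSet_int K (-u)) ▸ hq
  have hmaxp : ∀ y ∈ K, dotZ y u ≤ dotZ p u := hpint.2
  have hmaxq : ∀ y ∈ K, - dotZ y u ≤ - dotZ q u := by
    intro y hy
    have := hqint.2 y hy
    rw [dotZ_neg_right, dotZ_neg_right] at this
    exact this
  -- dotZ on progressions
  have hdotprog : ∀ t : ℤ, dotZ (p + t • e) u = dotZ p u := by
    intro t; rw [dotZ_add, dotZ_smul, heu, mul_zero, add_zero]
  have hdotprog' : ∀ t : ℤ, dotZ (q + t • e) u = dotZ q u := by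
    intro t; rw [dotZ_add, dotZ_smul, heu, mul_zero, add_zero]
  -- level-set description of supports
  have hlevu : suppSet K (toR u) = {x ∈ K | dotZ x u = dotZ p u} := suppSet_level hp
  have hlevv : suppSet K (toR (-u)) = {x ∈ K | dotZ x u = dotZ q u} := by
    rw [suppSet_level hq]
    ext x
    simp only [Set.mem_setOf_eq, dotZ_neg_right, neg_inj]
  -- sum bound
  have hsum : ∀ v : Z2, 0 < cov K v → dotZ v u ≤ dotZ p u - dotZ q u := by
    intro v hv
    obtain ⟨x, hx, y, hy, rfl⟩ := (cov_pos_iff hfin v).1 hv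
    rw [dotZ_sub]
    have := hmaxp x hx
    have := hmaxq y hy
    omega
  have hpq : p - q ∈ Scov (cov K) u := by
    refine ⟨(cov_pos_iff hfin _).2 ⟨p, hpK, q, hqK, rfl⟩, ?_⟩
    intro w hw
    rw [dotZ_sub]
    exact hsum w hw
  have hchar : ∀ v : Z2, v ∈ Scov (cov K) u ↔ 0 < cov K v ∧ dotZ v u = dotZ p u - dotZ q u := by
    intro v
    constructor
    · rintro ⟨hv, hmax⟩
      refine ⟨hv, le_antisymm (hsum v hv) ?_⟩
      have := hmax (p - q) hpq.1
      rw [dotZ_sub] at this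
      exact this
    · rintro ⟨hv, heq⟩
      exact ⟨hv, fun w hw => heq ▸ hsum w hw⟩
  -- decomposition of extremal pairs
  have hdecomp : ∀ x ∈ K, ∀ y ∈ K, dotZ x u - dotZ y u = dotZ p u - dotZ q u →
      (∃ i ∈ Set.Icc (0:ℤ) n, x = p + i • e) ∧ (∃ j ∈ Set.Icc (0:ℤ) m, y = q + j • e) := by
    intro x hx y hy hxy
    have h1 := hmaxp x hx
    have h2 := hmaxq y hy
    have hxlev : dotZ x u = dotZ p u := by omega
    have hylev : dotZ y u = dotZ q u := by omega
    have hxF : x ∈ suppSet K (toR u) := by rw [hlevu]; exact ⟨hx, hxlev⟩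
    have hyF : y ∈ suppSet K (toR (-u)) := by rw [hlevv]; exact ⟨hy, hylev⟩
    rw [hFu] at hxF
    rw [hFv] at hyF
    obtain ⟨i, hi, hix⟩ := hxF
    obtain ⟨j, hj, hjy⟩ := hyF
    exact ⟨⟨i, hi, hix.symm⟩, ⟨j, hj, hjy.symm⟩⟩
  -- the description of Scov as a progression
  have hScov : Scov (cov K) u = (fun t : ℤ => (p - q) + t • e) '' Set.Icc (-m) n := by
    ext v
    rw [hchar]
    constructor
    · rintro ⟨hv, heq⟩
      obtain ⟨x, hx, y, hy, rfl⟩ := (cov_pos_iff hfin _).1 hv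
      rw [dotZ_sub] at heq
      obtain ⟨⟨i, hi, rfl⟩, ⟨j, hj, rfl⟩⟩ := hdecomp x hx y hy heq
      refine ⟨i - j, Set.mem_Icc.2 ⟨by rw [Set.mem_Icc] at hi hj; omega,
        by rw [Set.mem_Icc] at hi hj; omega⟩, ?_⟩
      show p - q + (i - j) • e = p + i • e - (q + j • e)
      rw [sub_smul]; abel
    · rintro ⟨t, ht, rfl⟩
      rw [Set.mem_Icc] at ht
      set i : ℤ := max 0 t with hi
      set j : ℤ := i - t with hj
      have hiI : i ∈ Set.Icc (0:ℤ) n := Set.mem_Icc.2 ⟨by omega, by omega⟩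
      have hjI : j ∈ Set.Icc (0:ℤ) m := Set.mem_Icc.2 ⟨by omega, by omega⟩
      have hxK : p + i • e ∈ K := (hprogmem i hiI).1
      have hyK : q + j • e ∈ K := (hprogmem' j hjI).1
      have hveq : (fun t : ℤ => (p - q) + t • e) t = (p + i • e) - (q + j • e) := by
        show p - q + t • e = p + i • e - (q + j • e)
        have : t = i - j := by omega
        rw [this, sub_smul]; abel
      constructor
      · rw [hveq]
        exact (cov_pos_iff hfin _).2 ⟨_, hxK, _, hyK, rfl⟩
      · show dotZ (p - q + t • e) u = _
        rw [dotZ_add, dotZ_smul, heu, mul_zero, add_zero, dotZ_sub]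
  -- cardinalities of the support sets
  have hcardu : (suppSet K (toR u)).ncard = (n + 1).toNat := by
    rw [hFu, ncard_progression p he0]
    congr 1; omega
  have hcardv : (suppSet K (toR (-u))).ncard = (m + 1).toNat := by
    rw [hFv, ncard_progression q he0]
    congr 1; omega
  have hcardS : (Scov (cov K) u).ncard = (n + m + 1).toNat := by
    rw [hScov, ncard_progression _ he0]
    congr 1; omega
  constructor
  · rw [hcardu, hcardv, hcardS]; omega
  · -- the value of cov on points of Scov
    have hval : ∀ t ∈ Set.Icc (-m) n,
        cov K ((p - q) + t • e) = (min n (t + m) - max 0 t + 1).toNat := by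
      intro t ht
      rw [Set.mem_Icc] at ht
      have hset : K ∩ ((fun x => x + ((p - q) + t • e)) '' K)
          = (fun i : ℤ => p + i • e) '' Set.Icc (max 0 t) (min n (t + m)) := by
        ext x
        constructor
        · rintro ⟨hxK, y, hyK, hyx⟩
          replace hyx : y + (p - q + t • e) = x := hyx
          subst hyx
          have hxy : dotZ (y + (p - q + t • e)) u - dotZ y u = dotZ p u - dotZ q u := by
            rw [dotZ_add, dotZ_add, dotZ_smul, heu, mul_zero, add_zero, dotZ_sub]
            ring
          have h1 := hmaxp _ hxK
          have h2 := hmaxq _ hyK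
          have hxlev : dotZ (y + (p - q + t • e)) u = dotZ p u := by omega
          have hylev : dotZ y u = dotZ q u := by omega
          obtain ⟨⟨i, hi, hix⟩, ⟨j, hj, hjy⟩⟩ := hdecomp _ hxK _ hyK (by omega)
          rw [Set.mem_Icc] at hi hj
          refine ⟨i, Set.mem_Icc.2 ⟨?_, ?_⟩, hix.symm⟩
          · -- i = j + t
            have hij : i = j + t := by
              have : p + i • e = p + (j + t) • e := by
                rw [← hix, hjy, add_smul]
                abel
              have := smul_e_inj he0 (add_left_cancel this)
              omega
            omega
          · have hij : i = j + t := by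
              have : p + i • e = p + (j + t) • e := by
                rw [← hix, hjy, add_smul]
                abel
              have := smul_e_inj he0 (add_left_cancel this)
              omega
            omega
        · rintro ⟨i, hi, rfl⟩
          rw [Set.mem_Icc] at hi
          have hiI : i ∈ Set.Icc (0:ℤ) n := Set.mem_Icc.2 ⟨by omega, by omega⟩
          have hjI : i - t ∈ Set.Icc (0:ℤ) m := Set.mem_Icc.2 ⟨by omega, by omega⟩
          refine ⟨(hprogmem i hiI).1, q + (i - t) • e, (hprogmem' _ hjI).1, ?_⟩
          show q + (i - t) • e + (p - q + t • e) = p + i • e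
          rw [sub_smul]; abel
      rw [cov, hset, ncard_progression _ he0]
      congr 1; omega
    -- compute the sup
    have hmem0 : (p - q) ∈ Scov (cov K) u := hpq
    have hval0 : cov K (p - q) = (min (n+1) (m+1)).toNat := by
      have := hval 0 (Set.mem_Icc.2 ⟨by omega, by omega⟩)
      simp only [zero_smul, add_zero] at this
      rw [this]
      congr 1
      omega
    have hub : ∀ c ∈ (cov K) '' Scov (cov K) u,
        c ≤ min (suppSet K (toR u)).ncard (suppSet K (toR (-u))).ncard := by
      rintro c ⟨v, hv, rfl⟩
      rw [hScov] at hv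
      obtain ⟨t, ht, rfl⟩ := hv
      rw [hval t ht, hcardu, hcardv]
      rw [Set.mem_Icc] at ht
      omega
    have hnemem : (min (n+1) (m+1)).toNat ∈ (cov K) '' Scov (cov K) u :=
      ⟨p - q, hmem0, hval0⟩
    rw [Mx]
    apply le_antisymm
    · exact csSup_le ⟨_, hnemem⟩ hub
    · have := le_csSup ⟨_, hub⟩ hnemem
      calc min (suppSet K (toR u)).ncard (suppSet K (toR (-u))).ncard
          = (min (n+1) (m+1)).toNat := by rw [hcardu, hcardv]; omega
        _ ≤ _ := this

section Derivation

lemma dotZ_neg_left (x u : Z2) : dotZ (-x) u = - dotZ x u := by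
  simp [dotZ]; ring

lemma primitive_neg {u : Z2} : primitive (-u) ↔ primitive u := by
  simp [primitive, Int.gcd]

lemma mem_negSet {K : Set Z2} {x : Z2} : x ∈ negSet K ↔ -x ∈ K := by
  constructor
  · rintro ⟨y, hy, rfl⟩
    simpa using hy
  · intro h
    exact ⟨-x, h, by simp⟩

lemma suppSet_negSet (K : Set Z2) (u : Z2) :
    suppSet (negSet K) (toR u) = (fun x : Z2 => -x) '' suppSet K (toR (-u)) := by
  rw [suppSet_int, suppSet_int]
  ext x
  constructor
  · rintro ⟨hx, hmax⟩
    refine ⟨-x, ⟨mem_negSet.1 hx, fun z hz => ?_⟩, by simp⟩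
    have h := hmax (-z) (mem_negSet.2 (by simpa using hz))
    simp only [dotZ_neg_left, dotZ_neg_right] at h ⊢
    omega
  · rintro ⟨w, ⟨hw, hmax⟩, rfl⟩
    refine ⟨mem_negSet.2 (by simpa using hw), fun y hy => ?_⟩
    have h := hmax (-y) (mem_negSet.1 hy)
    simp only [dotZ_neg_left, dotZ_neg_right] at h ⊢
    omega

lemma A_negSet (K : Set Z2) (u : Z2) :
    (suppSet (negSet K) (toR u)).ncard = (suppSet K (toR (-u))).ncard := by
  rw [suppSet_negSet, Set.ncard_image_of_injective _ neg_injective]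

lemma mem_normals {K : Set Z2} {u : Z2} :
    u ∈ normals K ↔ primitive u ∧ u ≠ 0 ∧ 1 < (suppSet K (toR u)).ncard := by
  rw [normals, Set.mem_setOf_eq, isEdge]

lemma mem_normals_negSet {K : Set Z2} {u : Z2} :
    u ∈ normals (negSet K) ↔ primitive u ∧ u ≠ 0 ∧ 1 < (suppSet K (toR (-u))).ncard := by
  rw [mem_normals, A_negSet]

lemma normals_negSet_eq (K : Set Z2) : normals (negSet K) = (fun u : Z2 => -u) '' normals K := by
  ext u
  rw [mem_normals_negSet]
  constructor
  · rintro ⟨h1, h2, h3⟩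
    exact ⟨-u, mem_normals.2 ⟨primitive_neg.2 h1, by simpa using h2, h3⟩, by simp⟩
  · rintro ⟨v, hv, rfl⟩
    rw [mem_normals] at hv
    exact ⟨primitive_neg.2 hv.1, by simpa using hv.2.1, by rw [neg_neg]; exact hv.2.2⟩

lemma detZ_neg_left (u v : Z2) : detZ (-u) v = - detZ u v := by
  simp [detZ]; ring

lemma detZ_neg_right (u v : Z2) : detZ u (-v) = - detZ u v := by
  simp [detZ]; ring

lemma Dset_union_negSet (K : Set Z2) :
    Dset (normals K ∪ normals (negSet K)) = Dset (normals K) := by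
  apply Set.Subset.antisymm
  · rintro d ⟨hd0, u, hu, v, hv, hdet⟩
    have hmap : ∀ w : Z2, w ∈ normals K ∪ normals (negSet K) →
        ∃ w' ∈ normals K, (w' = w ∨ w' = -w) := by
      rintro w (hw | hw)
      · exact ⟨w, hw, Or.inl rfl⟩
      · rw [normals_negSet_eq] at hw
        obtain ⟨w', hw', rfl⟩ := hw
        exact ⟨w', hw', Or.inr (by simp)⟩
    obtain ⟨u', hu', hu'e⟩ := hmap u hu
    obtain ⟨v', hv', hv'e⟩ := hmap v hv
    refine ⟨hd0, u', hu', v', hv', ?_⟩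
    rw [hdet]
    congr 1
    rcases hu'e with rfl | rfl <;> rcases hv'e with rfl | rfl <;>
      simp [detZ_neg_left, detZ_neg_right]
  · rintro d ⟨hd0, u, hu, v, hv, hdet⟩
    exact ⟨hd0, u, Or.inl hu, v, Or.inl hv, hdet⟩

/-- the unordered-pair comparison property -/
def pairP (K L : Set Z2) (u : Z2) : Prop :=
  ((suppSet K (toR u)).ncard = (suppSet L (toR u)).ncard ∧
    (suppSet K (toR (-u))).ncard = (suppSet L (toR (-u))).ncard) ∨
  ((suppSet K (toR u)).ncard = (suppSet L (toR (-u))).ncard ∧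
    (suppSet K (toR (-u))).ncard = (suppSet L (toR u)).ncard)

lemma pairP_symm {K L : Set Z2} {u : Z2} (h : pairP K L u) : pairP L K u := by
  rcases h with ⟨h1, h2⟩ | ⟨h1, h2⟩
  · exact Or.inl ⟨h1.symm, h2.symm⟩
  · exact Or.inr ⟨h2.symm, h1.symm⟩

lemma pairP_of_cov {K L : Set Z2} (hKfin : K.Finite) (hLfin : L.Finite)
    (hKconv : latticeConvex K) (hLconv : latticeConvex L)
    (hKne : K.Nonempty) (hLne : L.Nonempty)
    (hcov : cov K = cov L) {u : Z2} (hu : u ≠ 0) : pairP K L u := by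
  obtain ⟨h1K, h2K⟩ := key_lemma hKfin hKconv hKne hu
  obtain ⟨h1L, h2L⟩ := key_lemma hLfin hLconv hLne hu
  rw [hcov] at h1K h2K
  rw [pairP]
  omega

lemma mOne_le {K L : Set Z2} (hP : ∀ u : Z2, u ≠ 0 → pairP K L u) : mOne K ≤ mOne L := by
  rw [mOne, mOne]
  apply le_iInf₂
  intro u hu
  obtain ⟨hprim, hu0, hcard⟩ := mem_normals.1 hu
  rcases hP u hu0 with ⟨h1, h2⟩ | ⟨h1, h2⟩
  · have hmem : u ∈ normals K := mem_normals.2 ⟨hprim, hu0, by omega⟩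
    calc (⨅ u ∈ normals K, ((suppSet K (toR u)).ncard : ℝ≥0∞))
        ≤ ((suppSet K (toR u)).ncard : ℝ≥0∞) := iInf₂_le u hmem
      _ = _ := by rw [h1]
  · have hmem : -u ∈ normals K := mem_normals.2 ⟨primitive_neg.2 hprim,
      by simpa using hu0, by omega⟩
    calc (⨅ u ∈ normals K, ((suppSet K (toR u)).ncard : ℝ≥0∞))
        ≤ ((suppSet K (toR (-u))).ncard : ℝ≥0∞) := iInf₂_le (-u) hmem
      _ = _ := by rw [h2]

lemma mTwo_le {K L : Set Z2} (hP : ∀ u : Z2, u ≠ 0 → pairP K L u) : mTwo K ≤ mTwo L := by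
  rw [mTwo, mTwo]
  apply le_iInf₂
  intro u hu
  obtain ⟨hu0, hc1, hc2⟩ := hu
  rcases hP u hu0 with ⟨h1, h2⟩ | ⟨h1, h2⟩
  · have hmem : u ∈ {u : Z2 | u ≠ 0 ∧ 1 < (suppSet K (toR (-u))).ncard ∧
        (suppSet K (toR (-u))).ncard < (suppSet K (toR u)).ncard} := ⟨hu0, by omega, by omega⟩
    calc _ ≤ (((suppSet K (toR u)).ncard - (suppSet K (toR (-u))).ncard + 1 : ℕ) : ℝ≥0∞) :=
        iInf₂_le u hmem
      _ = _ := by rw [h1, h2]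
  · have hmem : -u ∈ {u : Z2 | u ≠ 0 ∧ 1 < (suppSet K (toR (-u))).ncard ∧
        (suppSet K (toR (-u))).ncard < (suppSet K (toR u)).ncard} := by
      refine ⟨by simpa using hu0, ?_, ?_⟩ <;> rw [neg_neg] <;> omega
    calc _ ≤ (((suppSet K (toR (-u))).ncard - (suppSet K (toR (-(-u)))).ncard + 1 : ℕ) : ℝ≥0∞) :=
        iInf₂_le (-u) hmem
      _ = _ := by rw [neg_neg, h1, h2]

end Derivation

end AuxCov
/-- If `K, L ∈ 𝒦(ℤ²)` have equal covariograms, then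
`m'(K) = m'(L)`, `m''(K) = m''(L)`, `m(K) = m(L)`,
`U(K) ∪ U(−K) = U(L) ∪ U(−L)` and `δ(K) = δ(L)`. -/
theorem covariogram_determines_invariants
    (K L : Set Z2) (hKfin : K.Finite) (hLfin : L.Finite)
    (hKconv : latticeConvex K) (hLconv : latticeConvex L)
    (hKspan : spans K) (hLspan : spans L)
    (hcov : cov K = cov L) :
    mOne K = mOne L ∧ mTwo K = mTwo L ∧ mm K = mm L ∧
      normals K ∪ normals (negSet K) = normals L ∪ normals (negSet L) ∧
      discK K = discK L := by
  have hKne := spans_nonempty hKspan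
  have hLne := spans_nonempty hLspan
  have hP : ∀ u : Z2, u ≠ 0 → pairP K L u :=
    fun u hu => pairP_of_cov hKfin hLfin hKconv hLconv hKne hLne hcov hu
  have hP' : ∀ u : Z2, u ≠ 0 → pairP L K u := fun u hu => pairP_symm (hP u hu)
  have h1 : mOne K = mOne L := le_antisymm (mOne_le hP) (mOne_le hP')
  have h2 : mTwo K = mTwo L := le_antisymm (mTwo_le hP) (mTwo_le hP')
  have h4 : normals K ∪ normals (negSet K) = normals L ∪ normals (negSet L) := by
    ext u
    rcases eq_or_ne u 0 with rfl | hu0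
    · simp [Set.mem_union, mem_normals, A_negSet]
    · simp only [Set.mem_union, mem_normals, A_negSet]
      rcases hP u hu0 with ⟨e1, e2⟩ | ⟨e1, e2⟩ <;>
        rw [e1, e2] <;> tauto
  refine ⟨h1, h2, by rw [mm, mm, h1, h2], h4, ?_⟩
  have hD : Dset (normals K) = Dset (normals L) := by
    rw [← Dset_union_negSet K, ← Dset_union_negSet L, h4]
  rw [discK, discK, disc, disc, hD]
end

section
/- Let K and L be finite lattice-convex subsets of ℤ² whose affine hulls are all of ℝ², and suppose g_K = g_L. Then for every u ∈ ℤ² \ {0} there exists L' ∈ [L] (i.e., L' is a translate of L or of −L) such that F(K,u) = F(L',u) and F(K,−u) = F(L',−u). -/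
open scoped Pointwise ENNReal

namespace EUF

abbrev dotZ (x u : Z2) : ℤ := x.1 * u.1 + x.2 * u.2

lemma suppSet_eq_int (K : Set Z2) (u : Z2) :
    suppSet K (toR u) = {x | x ∈ K ∧ ∀ y ∈ K, dotZ y u ≤ dotZ x u} := by
  ext x
  simp only [suppSet, Set.mem_setOf_eq, dotR, toR, dotZ]
  constructor
  · rintro ⟨hx, h⟩; exact ⟨hx, fun y hy => by exact_mod_cast h y hy⟩
  · rintro ⟨hx, h⟩; exact ⟨hx, fun y hy => by exact_mod_cast h y hy⟩

/-- characterization of the lattice line orthogonal to `u`. -/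
lemma orth_char (u : Z2) (hu : u ≠ 0) :
    ∃ e : Z2, e ≠ 0 ∧ ∀ v : Z2, dotZ v u = 0 ↔ ∃ k : ℤ, v = k • e := by
  set g : ℤ := (Int.gcd u.1 u.2 : ℤ) with hg
  have hgpos : 0 < Int.gcd u.1 u.2 := by
    apply Int.gcd_pos_iff.2
    by_contra h
    push_neg at h
    exact hu (Prod.ext h.1 h.2)
  have hg0 : g ≠ 0 := by positivity
  set a : ℤ := u.1 / g with ha
  set b : ℤ := u.2 / g with hb
  have hu1 : u.1 = g * a := by
    rw [ha, Int.mul_ediv_cancel' (Int.gcd_dvd_left _ _)]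
  have hu2 : u.2 = g * b := by
    rw [hb, Int.mul_ediv_cancel' (Int.gcd_dvd_right _ _)]
  have hab : Int.gcd a b = 1 := by
    rw [ha, hb, hg]; exact Int.gcd_div_gcd_div_gcd hgpos
  obtain ⟨s, t, hst⟩ : ∃ s t : ℤ, a * s + b * t = 1 := by
    refine ⟨Int.gcdA a b, Int.gcdB a b, ?_⟩
    have := Int.gcd_eq_gcd_ab a b
    rw [hab] at this
    push_cast at this
    linarith
  refine ⟨(-b, a), ?_, ?_⟩
  · intro h
    have h1 : b = 0 := by have := congrArg Prod.fst h; simpa using this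
    have h2 : a = 0 := by have := congrArg Prod.snd h; simpa using this
    rw [h1, h2] at hab; simp [Int.gcd] at hab
  · intro v
    constructor
    · intro hv
      have hv' : v.1 * a + v.2 * b = 0 := by
        have : g * (v.1 * a + v.2 * b) = 0 := by
          rw [dotZ] at hv; rw [hu1, hu2] at hv; linarith
        exact (mul_eq_zero.1 this).resolve_left hg0
      refine ⟨s * v.2 - t * v.1, ?_⟩
      have e1 : v.1 = (s * v.2 - t * v.1) * (-b) := by linear_combination s * hv' - v.1 * hst
      have e2 : v.2 = (s * v.2 - t * v.1) * a := by linear_combination t * hv' - v.2 * hst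
      refine Prod.ext ?_ ?_
      · simpa using e1
      · simpa using e2
    · rintro ⟨k, rfl⟩
      simp only [dotZ, Prod.smul_fst, Prod.smul_snd, smul_eq_mul]
      rw [hu1, hu2]; ring


def IvF (p e : Z2) (m : ℕ) : Finset Z2 := (Finset.range m).image (fun i : ℕ => p + (i : ℤ) • e)
def Iv (p e : Z2) (m : ℕ) : Set Z2 := ↑(IvF p e m)

lemma mem_Iv {p e : Z2} {m : ℕ} {x : Z2} :
    x ∈ Iv p e m ↔ ∃ i : ℕ, i < m ∧ x = p + (i : ℤ) • e := by
  simp only [Iv, IvF, Finset.coe_image, Set.mem_image, Finset.mem_coe, Finset.mem_range]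
  aesop

lemma smul_cancel {e : Z2} (he : e ≠ 0) {k l : ℤ} (h : k • e = l • e) : k = l := by
  by_contra hkl
  have h1 : k * e.1 = l * e.1 := by have := congrArg Prod.fst h; simpa using this
  have h2 : k * e.2 = l * e.2 := by have := congrArg Prod.snd h; simpa using this
  have hk : k - l ≠ 0 := sub_ne_zero.2 hkl
  have e1 : e.1 = 0 := by
    have : (k - l) * e.1 = 0 := by linear_combination h1
    exact (mul_eq_zero.1 this).resolve_left hk
  have e2 : e.2 = 0 := by
    have : (k - l) * e.2 = 0 := by linear_combination h2
    exact (mul_eq_zero.1 this).resolve_left hk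
  exact he (Prod.ext e1 e2)

lemma Iv_inj {e : Z2} (he : e ≠ 0) (p : Z2) :
    Function.Injective (fun i : ℕ => p + (i : ℤ) • e) := by
  intro i j h
  simp only [add_right_inj] at h
  exact_mod_cast smul_cancel he h

lemma card_IvF {p e : Z2} (he : e ≠ 0) (m : ℕ) : (IvF p e m).card = m := by
  rw [IvF, Finset.card_image_of_injective _ (Iv_inj he p), Finset.card_range]

lemma ncard_Iv {p e : Z2} (he : e ≠ 0) (m : ℕ) : (Iv p e m).ncard = m := by
  rw [Iv, Set.ncard_coe_finset, card_IvF he]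

lemma Iv_nonempty {p e : Z2} {m : ℕ} (hm : 0 < m) : (Iv p e m).Nonempty :=
  ⟨p + (0 : ℤ) • e, mem_Iv.2 ⟨0, hm, by norm_num⟩⟩

lemma Iv_translate (p e t : Z2) (m : ℕ) :
    (fun x => x + t) '' Iv p e m = Iv (p + t) e m := by
  ext x
  simp only [Set.mem_image, mem_Iv]
  constructor
  · rintro ⟨y, ⟨i, hi, rfl⟩, rfl⟩; exact ⟨i, hi, by ring⟩
  · rintro ⟨i, hi, rfl⟩; exact ⟨p + (i : ℤ) • e, ⟨i, hi, rfl⟩, by ring⟩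

lemma Iv_neg (p e : Z2) {m : ℕ} (hm : 0 < m) :
    (fun x => -x) '' Iv p e m = Iv (-p - ((m : ℤ) - 1) • e) e m := by
  ext x
  simp only [Set.mem_image, mem_Iv]
  constructor
  · rintro ⟨y, ⟨i, hi, rfl⟩, rfl⟩
    refine ⟨m - 1 - i, by omega, ?_⟩
    have : ((m - 1 - i : ℕ) : ℤ) = (m : ℤ) - 1 - i := by push_cast; omega
    rw [this]
    have : (m : ℤ) - 1 - i = ((m:ℤ) - 1) + (-(i:ℤ)) := by ring
    rw [this]
    module
  · rintro ⟨i, hi, rfl⟩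
    refine ⟨p + ((m - 1 - i : ℕ) : ℤ) • e, ⟨m - 1 - i, by omega, rfl⟩, ?_⟩
    have : ((m - 1 - i : ℕ) : ℤ) = (m : ℤ) - 1 - i := by push_cast; omega
    rw [this]
    have h2 : (m : ℤ) - 1 - i = ((m:ℤ) - 1) + (-(i:ℤ)) := by ring
    rw [h2]
    module

lemma Iv_sub (p q e : Z2) {m n : ℕ} (hm : 0 < m) (hn : 0 < n) :
    {w : Z2 | ∃ x ∈ Iv p e m, ∃ y ∈ Iv q e n, w = x - y} =
      Iv (p - q - ((n : ℤ) - 1) • e) e (m + n - 1) := by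
  ext w
  simp only [Set.mem_setOf_eq, mem_Iv]
  constructor
  · rintro ⟨x, ⟨i, hi, rfl⟩, y, ⟨j, hj, rfl⟩, rfl⟩
    refine ⟨i + (n - 1 - j), by omega, ?_⟩
    have hc : ((i + (n - 1 - j) : ℕ) : ℤ) = (i : ℤ) + ((n : ℤ) - 1 - j) := by push_cast; omega
    rw [hc]
    have : (i : ℤ) + ((n:ℤ) - 1 - j) = (i:ℤ) + (-(j:ℤ)) + ((n:ℤ) - 1) := by ring
    rw [this]
    module
  · rintro ⟨c, hc, rfl⟩
    obtain ⟨i, j, hi, hj, hij⟩ : ∃ i j : ℕ, i < m ∧ j < n ∧ (i : ℤ) - j = (c : ℤ) - ((n:ℤ) - 1) := by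
      rcases le_or_gt (c + 1) n with h | h
      · exact ⟨0, n - 1 - c, hm, by omega, by push_cast; omega⟩
      · exact ⟨c + 1 - n, 0, by omega, hn, by push_cast; omega⟩
    refine ⟨p + (i : ℤ) • e, ⟨i, hi, rfl⟩, q + (j : ℤ) • e, ⟨j, hj, rfl⟩, ?_⟩
    have : (c : ℤ) = (i : ℤ) - j + ((n:ℤ) - 1) := by omega
    rw [this]
    module

lemma Iv_eq_iff {p p' e : Z2} {m m' : ℕ} (he : e ≠ 0) (hm : 0 < m) (hm' : 0 < m')
    (h : Iv p e m = Iv p' e m') : p = p' ∧ m = m' := by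
  have hcard : m = m' := by
    have := congrArg Set.ncard h
    rwa [ncard_Iv he, ncard_Iv he] at this
  subst hcard
  refine ⟨?_, rfl⟩
  have h1 : p ∈ Iv p' e m := h ▸ mem_Iv.2 ⟨0, hm, by norm_num⟩
  have h2 : p' ∈ Iv p e m := h.symm ▸ mem_Iv.2 ⟨0, hm, by norm_num⟩
  obtain ⟨i, _, hi⟩ := mem_Iv.1 h1
  obtain ⟨j, _, hj⟩ := mem_Iv.1 h2
  rw [hj] at hi
  have : ((0:ℤ)) • e = ((j : ℤ) + i) • e := by
    have h3 : p + (0:ℤ) • e = p + ((j:ℤ) + i) • e := by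
      nth_rewrite 1 [zero_smul, add_zero, hi]
      module
    exact add_left_cancel h3
  have hji := smul_cancel he this
  have : (j : ℤ) = 0 := by omega
  rw [hj, this]; simp


-- new part
lemma dotZ_add (x y u : Z2) : dotZ (x + y) u = dotZ x u + dotZ y u := by
  simp [dotZ]; ring

lemma dotZ_sub (x y u : Z2) : dotZ (x - y) u = dotZ x u - dotZ y u := by
  simp [dotZ]; ring

lemma dotZ_negR (x u : Z2) : dotZ x (-u) = -dotZ x u := by
  simp [dotZ]; ring

lemma toR_add (a b : Z2) : toR (a + b) = toR a + toR b := by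
  simp [toR, Prod.ext_iff]

lemma toR_zsmul (n : ℤ) (a : Z2) : toR (n • a) = (n : ℝ) • toR a := by
  simp [toR, Prod.ext_iff]

lemma supp_nonempty {K : Set Z2} (hfin : K.Finite) (hne : K.Nonempty) (u : Z2) :
    (suppSet K (toR u)).Nonempty := by
  rw [suppSet_eq_int]
  obtain ⟨x, hx, hmax⟩ := hfin.toFinset.exists_max_image (fun y => dotZ y u)
    (by rwa [Set.Finite.toFinset_nonempty])
  exact ⟨x, by simpa using hx, fun y hy => hmax y (hfin.mem_toFinset.2 hy)⟩

lemma convex_between {K : Set Z2} (hconv : latticeConvex K) {x0 e : Z2} {i j k : ℤ}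
    (hij : i ≤ j) (hjk : j ≤ k) (hi : x0 + i • e ∈ K) (hk : x0 + k • e ∈ K) :
    x0 + j • e ∈ K := by
  obtain ⟨C, hC, rfl⟩ := hconv
  rcases eq_or_lt_of_le (hij.trans hjk) with h | h
  · have : j = i := le_antisymm (h ▸ hjk) hij
    rwa [this]
  · set lam : ℝ := ((k : ℝ) - j) / ((k : ℝ) - i) with hlam
    have hki : (0:ℝ) < (k : ℝ) - i := by
      have : (i:ℝ) < k := by exact_mod_cast h
      linarith
    have h0 : 0 ≤ lam := by
      apply div_nonneg _ (le_of_lt hki)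
      have : (j:ℝ) ≤ k := by exact_mod_cast hjk
      linarith
    have h1 : 0 ≤ 1 - lam := by
      have hij' : (i:ℝ) ≤ j := by exact_mod_cast hij
      have hle : lam ≤ 1 := by rw [hlam, div_le_one hki]; linarith
      linarith
    have key : toR (x0 + j • e) = lam • toR (x0 + i • e) + (1 - lam) • toR (x0 + k • e) := by
      rw [toR_add, toR_add, toR_add, toR_zsmul, toR_zsmul, toR_zsmul]
      have hj' : (j : ℝ) = lam * i + (1 - lam) * k := by
        rw [hlam]; field_simp; ring
      rw [hj']
      module
    have := hC hi hk h0 h1 (by ring)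
    rw [Set.mem_preimage, key]
    exact this

lemma seg_struct {K : Set Z2} (hfin : K.Finite) (hne : K.Nonempty)
    (hconv : latticeConvex K) (u e : Z2) (he0 : e ≠ 0)
    (he : ∀ v : Z2, dotZ v u = 0 ↔ ∃ k : ℤ, v = k • e) :
    ∃ (p : Z2) (m : ℕ), 0 < m ∧ suppSet K (toR u) = Iv p e m := by
  obtain ⟨x0, hx0⟩ := supp_nonempty hfin hne u
  rw [suppSet_eq_int] at hx0
  set F : Set Z2 := {x | x ∈ K ∧ ∀ y ∈ K, dotZ y u ≤ dotZ x u} with hF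
  have hFsub : F ⊆ K := fun x hx => hx.1
  have hdot : ∀ x ∈ F, dotZ x u = dotZ x0 u := fun x hx =>
    le_antisymm (hx0.2 x (hx.1)) (hx.2 x0 hx0.1)
  have hrep : ∀ x ∈ F, ∃ k : ℤ, x = x0 + k • e := by
    intro x hx
    obtain ⟨k, hk⟩ := (he (x - x0)).1 (by rw [dotZ_sub, hdot x hx]; ring)
    exact ⟨k, by rw [← hk]; ring⟩
  have hmemF : ∀ k : ℤ, x0 + k • e ∈ K → x0 + k • e ∈ F := by
    intro k hk
    refine ⟨hk, fun y hy => ?_⟩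
    have : dotZ (k • e) u = 0 := (he _).2 ⟨k, rfl⟩
    rw [dotZ_add, this, add_zero]
    exact hx0.2 y hy
  set I : Set ℤ := {k : ℤ | x0 + k • e ∈ F} with hI
  have hIfin : I.Finite := by
    have hinj : Function.Injective (fun k : ℤ => x0 + k • e) := by
      intro a b hab
      exact smul_cancel he0 (by simpa using hab)
    have : I = (fun k : ℤ => x0 + k • e) ⁻¹' F := rfl
    rw [this]
    exact Set.Finite.preimage hinj.injOn (hfin.subset hFsub)
  have hI0 : (0:ℤ) ∈ I := by
    simp only [hI, Set.mem_setOf_eq, zero_smul, add_zero]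
    exact hx0
  set J : Finset ℤ := hIfin.toFinset with hJ
  have hJne : J.Nonempty := ⟨0, by simp [hJ, hIfin.mem_toFinset]; exact hI0⟩
  set a : ℤ := J.min' hJne with haa
  set b : ℤ := J.max' hJne with hbb
  have hab : a ≤ b := J.min'_le b (J.max'_mem hJne)
  have haI : a ∈ I := hIfin.mem_toFinset.1 (J.min'_mem hJne)
  have hbI : b ∈ I := hIfin.mem_toFinset.1 (J.max'_mem hJne)
  have hIcc : I = Set.Icc a b := by
    ext k
    constructor
    · intro hk
      have hk' : k ∈ J := hIfin.mem_toFinset.2 hk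
      exact ⟨J.min'_le k hk', J.le_max' k hk'⟩
    · rintro ⟨h1, h2⟩
      exact hmemF k (convex_between hconv h1 h2 (hFsub haI) (hFsub hbI))
  clear_value a b
  refine ⟨x0 + a • e, (b - a + 1).toNat, by omega, ?_⟩
  rw [suppSet_eq_int, ← hF]
  ext x
  constructor
  · intro hx
    obtain ⟨k, rfl⟩ := hrep x hx
    have hkI : k ∈ I := hx
    rw [hIcc] at hkI
    obtain ⟨hk1, hk2⟩ := hkI
    refine mem_Iv.2 ⟨(k - a).toNat, by omega, ?_⟩
    have : ((k - a).toNat : ℤ) = k - a := by omega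
    rw [this]
    module
  · intro hx
    obtain ⟨i, hi, rfl⟩ := mem_Iv.1 hx
    have : x0 + a • e + (i : ℤ) • e = x0 + (a + i) • e := by module
    rw [this]
    have : a + (i:ℤ) ∈ I := by rw [hIcc]; constructor <;> omega
    exact this


-- new part
lemma dotZ_negL (x u : Z2) : dotZ (-x) u = -dotZ x u := by simp [dotZ]; ring

lemma nonempty_of_spans {K : Set Z2} (h : spans K) : K.Nonempty := by
  rcases Set.eq_empty_or_nonempty K with rfl | h'
  · exfalso
    rw [spans] at h
    have h0 : (0 : R2) ∈ affineSpan ℝ (toR '' (∅ : Set Z2)) := h ▸ AffineSubspace.mem_top ℝ R2 0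
    simp at h0
    exact h0
  · exact h'

lemma mem_supp_neg_iff (K : Set Z2) (u : Z2) (y : Z2) :
    y ∈ suppSet K (toR (-u)) ↔ y ∈ K ∧ ∀ z ∈ K, dotZ y u ≤ dotZ z u := by
  rw [suppSet_eq_int]
  constructor
  · rintro ⟨h1, h2⟩
    refine ⟨h1, fun z hz => ?_⟩
    have := h2 z hz
    rw [dotZ_negR, dotZ_negR] at this
    linarith
  · rintro ⟨h1, h2⟩
    refine ⟨h1, fun z hz => ?_⟩
    rw [dotZ_negR, dotZ_negR]
    have := h2 z hz
    linarith

def Dif (K : Set Z2) : Set Z2 := {w | ∃ x ∈ K, ∃ y ∈ K, w = x - y}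

lemma Dif_cov {K : Set Z2} (hfin : K.Finite) (w : Z2) : w ∈ Dif K ↔ cov K w ≠ 0 := by
  have hfin' : (K ∩ ((fun x => x + w) '' K)).Finite := hfin.inter_of_left _
  constructor
  · rintro ⟨x, hx, y, hy, rfl⟩
    have hne : (K ∩ ((fun z => z + (x - y)) '' K)).Nonempty := ⟨x, hx, ⟨y, hy, by ring⟩⟩
    have := (Set.ncard_pos hfin').2 hne
    rw [cov]; omega
  · intro h
    have hpos : 0 < (K ∩ ((fun x => x + w) '' K)).ncard := Nat.pos_of_ne_zero h
    obtain ⟨x, hx, y, hy, hxy⟩ := (Set.ncard_pos hfin').1 hpos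
    exact ⟨x, hx, y, hy, by rw [← hxy]; ring⟩

lemma top_eq (K : Set Z2) (hfin : K.Finite) (hne : K.Nonempty) (u : Z2) :
    {w ∈ Dif K | ∀ w' ∈ Dif K, dotZ w' u ≤ dotZ w u}
      = {w | ∃ x ∈ suppSet K (toR u), ∃ y ∈ suppSet K (toR (-u)), w = x - y} := by
  obtain ⟨a, ha⟩ := supp_nonempty hfin hne u
  obtain ⟨b, hb⟩ := supp_nonempty hfin hne (-u)
  rw [suppSet_eq_int] at ha
  rw [mem_supp_neg_iff] at hb
  ext w
  constructor
  · rintro ⟨⟨x, hx, y, hy, rfl⟩, hmax⟩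
    have h1 : dotZ x u ≤ dotZ a u := ha.2 x hx
    have h2 : dotZ b u ≤ dotZ y u := hb.2 y hy
    have h3 : dotZ a u - dotZ b u ≤ dotZ x u - dotZ y u := by
      have := hmax (a - b) ⟨a, ha.1, b, hb.1, rfl⟩
      rw [dotZ_sub, dotZ_sub] at this
      linarith
    refine ⟨x, ?_, y, ?_, rfl⟩
    · rw [suppSet_eq_int]
      exact ⟨hx, fun z hz => by have := ha.2 z hz; omega⟩
    · rw [mem_supp_neg_iff]
      exact ⟨hy, fun z hz => by have := hb.2 z hz; omega⟩
  · rintro ⟨x, hx, y, hy, rfl⟩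
    rw [suppSet_eq_int] at hx
    rw [mem_supp_neg_iff] at hy
    refine ⟨⟨x, hx.1, y, hy.1, rfl⟩, ?_⟩
    rintro w' ⟨x', hx', y', hy', rfl⟩
    rw [dotZ_sub, dotZ_sub]
    have := hx.2 x' hx'
    have := hy.2 y' hy'
    omega

lemma cov_top {K : Set Z2} (u : Z2) {w x y : Z2}
    (hx : x ∈ suppSet K (toR u)) (hy : y ∈ suppSet K (toR (-u))) (hw : w = x - y) :
    K ∩ ((fun z => z + w) '' K)
      = suppSet K (toR u) ∩ ((fun z => z + w) '' suppSet K (toR (-u))) := by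
  rw [suppSet_eq_int] at hx
  rw [mem_supp_neg_iff] at hy
  have hwd : dotZ w u = dotZ x u - dotZ y u := by rw [hw, dotZ_sub]
  ext z
  constructor
  · rintro ⟨hzK, y', hy'K, rfl⟩
    have e1 : dotZ (y' + w) u ≤ dotZ x u := hx.2 _ hzK
    have e2 : dotZ y u ≤ dotZ y' u := hy.2 y' hy'K
    have e3 : dotZ (y' + w) u = dotZ y' u + dotZ w u := dotZ_add _ _ _
    have hz : dotZ (y' + w) u = dotZ x u := by omega
    have hy' : dotZ y' u = dotZ y u := by omega
    constructor
    · rw [suppSet_eq_int]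
      refine ⟨hzK, fun t ht => ?_⟩
      show dotZ t u ≤ dotZ (y' + w) u
      have := hx.2 t ht
      omega
    · refine ⟨y', ?_, rfl⟩
      rw [mem_supp_neg_iff]
      exact ⟨hy'K, fun t ht => by have := hy.2 t ht; omega⟩
  · rintro ⟨hz1, y', hy', rfl⟩
    rw [suppSet_eq_int] at hz1
    rw [mem_supp_neg_iff] at hy'
    exact ⟨hz1.1, y', hy'.1, rfl⟩

lemma sum_inter (FA FB : Finset Z2) :
    ∑ w ∈ (FA ×ˢ FB).image (fun p => p.1 - p.2),
      (FA ∩ FB.image (fun x => x + w)).card = FA.card * FB.card := by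
  rw [← Finset.card_product]
  rw [Finset.card_eq_sum_card_fiberwise
    (f := fun p : Z2 × Z2 => p.1 - p.2)
    (t := (FA ×ˢ FB).image (fun p => p.1 - p.2))
    (fun p hp => Finset.mem_image_of_mem _ hp)]
  apply Finset.sum_congr rfl
  intro w hw
  symm
  apply Finset.card_bij (fun (p : Z2 × Z2) _ => p.1)
  · rintro ⟨x, y⟩ hp
    rw [Finset.mem_filter, Finset.mem_product] at hp
    obtain ⟨⟨hx, hy⟩, hxy⟩ := hp
    refine Finset.mem_inter.2 ⟨hx, Finset.mem_image.2 ⟨y, hy, ?_⟩⟩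
    simp only at hxy ⊢
    rw [← hxy]; ring
  · rintro ⟨x, y⟩ hp ⟨x', y'⟩ hp' hxx
    rw [Finset.mem_filter, Finset.mem_product] at hp hp'
    simp only at hxx hp hp'
    have hyy : y = y' := by
      have h1 := hp.2
      have h2 := hp'.2
      rw [← hxx] at h2
      exact sub_right_inj.1 (h1.trans h2.symm)
    exact Prod.ext hxx hyy
  · intro x hx
    rw [Finset.mem_inter] at hx
    obtain ⟨hx1, hx2⟩ := hx
    obtain ⟨b, hb, hbx⟩ := Finset.mem_image.1 hx2
    refine ⟨(x, b), ?_, rfl⟩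
    rw [Finset.mem_filter, Finset.mem_product]
    simp only at hbx ⊢
    exact ⟨⟨hx1, hb⟩, by rw [← hbx]; ring⟩

lemma coe_image_sub (FA FB : Finset Z2) :
    (((FA ×ˢ FB).image (fun p => p.1 - p.2)) : Set Z2)
      = {w | ∃ x ∈ (FA : Set Z2), ∃ y ∈ (FB : Set Z2), w = x - y} := by
  ext w
  simp only [Finset.coe_image, Set.mem_image, Finset.mem_coe, Finset.mem_product,
    Set.mem_setOf_eq]
  constructor
  · rintro ⟨⟨x, y⟩, hxy, rfl⟩
    exact ⟨x, hxy.1, y, hxy.2, rfl⟩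
  · rintro ⟨x, hx, y, hy, rfl⟩
    exact ⟨⟨x, y⟩, ⟨hx, hy⟩, rfl⟩

lemma sum_cov {K : Set Z2} (hfin : K.Finite) {u e pK qK : Z2} {m n : ℕ} (he0 : e ≠ 0)
    (hA : suppSet K (toR u) = Iv pK e m) (hB : suppSet K (toR (-u)) = Iv qK e n) :
    ∑ w ∈ (IvF pK e m ×ˢ IvF qK e n).image (fun p => p.1 - p.2), cov K w = m * n := by
  have hcong : ∀ w ∈ (IvF pK e m ×ˢ IvF qK e n).image (fun p => p.1 - p.2),
      cov K w = (IvF pK e m ∩ (IvF qK e n).image (fun x => x + w)).card := by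
    intro w hw
    obtain ⟨⟨x, y⟩, hxy, rfl⟩ := Finset.mem_image.1 hw
    rw [Finset.mem_product] at hxy
    have hx : x ∈ suppSet K (toR u) := by rw [hA]; exact hxy.1
    have hy : y ∈ suppSet K (toR (-u)) := by rw [hB]; exact hxy.2
    rw [cov, cov_top u hx hy rfl, hA, hB]
    rw [Iv, Iv, ← Finset.coe_image, ← Finset.coe_inter, Set.ncard_coe_finset]
  rw [Finset.sum_congr rfl hcong, sum_inter, card_IvF he0, card_IvF he0]

lemma pair_eq {m n m' n' : ℕ} (hs : m + n = m' + n') (hp : m * n = m' * n') :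
    (m = m' ∧ n = n') ∨ (m = n' ∧ n = m') := by
  have hs' : (m : ℤ) + n = m' + n' := by exact_mod_cast hs
  have hp' : (m : ℤ) * n = m' * n' := by exact_mod_cast hp
  have key : ((m : ℤ) - m') * ((m : ℤ) - n') = 0 := by
    linear_combination (m : ℤ) * hs' - hp'
  rcases mul_eq_zero.1 key with h | h
  · left; constructor <;> omega
  · right; constructor <;> omega

lemma suppSet_translate (K : Set Z2) (t : Z2) (u : Z2) :
    suppSet ((fun x => x + t) '' K) (toR u) = (fun x => x + t) '' suppSet K (toR u) := by
  rw [suppSet_eq_int, suppSet_eq_int]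
  ext x
  simp only [Set.mem_image, Set.mem_setOf_eq]
  constructor
  · rintro ⟨⟨y, hy, rfl⟩, hmax⟩
    refine ⟨y, ⟨hy, fun z hz => ?_⟩, rfl⟩
    have := hmax (z + t) ⟨z, hz, rfl⟩
    rw [dotZ_add, dotZ_add] at this
    linarith
  · rintro ⟨y, ⟨hy, hmax⟩, rfl⟩
    refine ⟨⟨y, hy, rfl⟩, ?_⟩
    rintro z ⟨z', hz', rfl⟩
    rw [dotZ_add, dotZ_add]
    have := hmax z' hz'
    linarith

lemma suppSet_neg (K : Set Z2) (u : Z2) :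
    suppSet ((fun x => -x) '' K) (toR u) = (fun x => -x) '' suppSet K (toR (-u)) := by
  rw [suppSet_eq_int]
  ext x
  simp only [Set.mem_image, Set.mem_setOf_eq]
  constructor
  · rintro ⟨⟨y, hy, rfl⟩, hmax⟩
    refine ⟨y, ?_, rfl⟩
    rw [mem_supp_neg_iff]
    refine ⟨hy, fun z hz => ?_⟩
    have := hmax (-z) ⟨z, hz, rfl⟩
    rw [dotZ_negL, dotZ_negL] at this
    linarith
  · rintro ⟨y, hy, rfl⟩
    rw [mem_supp_neg_iff] at hy
    refine ⟨⟨y, hy.1, rfl⟩, ?_⟩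
    rintro z ⟨z', hz', rfl⟩
    rw [dotZ_negL, dotZ_negL]
    have := hy.2 z' hz'
    linarith



lemma final_step {M : Set Z2} {u e pM qM pK qK : Z2} {m n : ℕ}
    (hMA : suppSet M (toR u) = Iv pM e m) (hMB : suppSet M (toR (-u)) = Iv qM e n)
    (hpq : pK - qK = pM - qM) :
    suppSet ((fun x => x + (pK - pM)) '' M) (toR u) = Iv pK e m ∧
      suppSet ((fun x => x + (pK - pM)) '' M) (toR (-u)) = Iv qK e n := by
  constructor
  · rw [suppSet_translate, hMA, Iv_translate,
      show pM + (pK - pM) = pK from by ring]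
  · rw [suppSet_translate, hMB, Iv_translate,
      show qM + (pK - pM) = qK from by linear_combination hpq]


end EUF

/-- If `K, L ∈ 𝒦(ℤ²)` have equal covariograms, then for every
`u ∈ ℤ² \ {0}` there is `L' ∈ [L]` with `F(K,u) = F(L',u)` and `F(K,−u) = F(L',−u)`. -/
theorem edges_up_to_flips
    (K L : Set Z2) (hKfin : K.Finite) (hLfin : L.Finite)
    (hKconv : latticeConvex K) (hLconv : latticeConvex L)
    (hKspan : spans K) (hLspan : spans L)
    (hcov : cov K = cov L) :
    ∀ u : Z2, u ≠ 0 → ∃ L' : Set Z2, sameClass L L' ∧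
      suppSet K (toR u) = suppSet L' (toR u) ∧
      suppSet K (toR (-u)) = suppSet L' (toR (-u))    := by
  intro u hu
  classical
  obtain ⟨e, he0, he⟩ := EUF.orth_char u hu
  have hKne : K.Nonempty := EUF.nonempty_of_spans hKspan
  have hLne : L.Nonempty := EUF.nonempty_of_spans hLspan
  have hen : ∀ v : Z2, EUF.dotZ v (-u) = 0 ↔ ∃ k : ℤ, v = k • e := by
    intro v
    rw [EUF.dotZ_negR, neg_eq_zero]
    exact he v
  obtain ⟨pK, m, hm, hA⟩ := EUF.seg_struct hKfin hKne hKconv u e he0 he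
  obtain ⟨qK, n, hn, hB⟩ := EUF.seg_struct hKfin hKne hKconv (-u) e he0 hen
  obtain ⟨pL, m', hm', hA'⟩ := EUF.seg_struct hLfin hLne hLconv u e he0 he
  obtain ⟨qL, n', hn', hB'⟩ := EUF.seg_struct hLfin hLne hLconv (-u) e he0 hen
  have hDif : EUF.Dif K = EUF.Dif L := by
    ext w
    rw [EUF.Dif_cov hKfin w, EUF.Dif_cov hLfin w, hcov]
  have hTop : {w : Z2 | ∃ x ∈ suppSet K (toR u), ∃ y ∈ suppSet K (toR (-u)), w = x - y}
      = {w : Z2 | ∃ x ∈ suppSet L (toR u), ∃ y ∈ suppSet L (toR (-u)), w = x - y} := by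
    rw [← EUF.top_eq K hKfin hKne u, ← EUF.top_eq L hLfin hLne u, hDif]
  have hSK : {w : Z2 | ∃ x ∈ suppSet K (toR u), ∃ y ∈ suppSet K (toR (-u)), w = x - y}
      = EUF.Iv (pK - qK - ((n : ℤ) - 1) • e) e (m + n - 1) := by
    rw [hA, hB]
    exact EUF.Iv_sub pK qK e hm hn
  have hSL : {w : Z2 | ∃ x ∈ suppSet L (toR u), ∃ y ∈ suppSet L (toR (-u)), w = x - y}
      = EUF.Iv (pL - qL - ((n' : ℤ) - 1) • e) e (m' + n' - 1) := by
    rw [hA', hB']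
    exact EUF.Iv_sub pL qL e hm' hn'
  have hIvEq : EUF.Iv (pK - qK - ((n : ℤ) - 1) • e) e (m + n - 1)
      = EUF.Iv (pL - qL - ((n' : ℤ) - 1) • e) e (m' + n' - 1) := by
    rw [← hSK, hTop, hSL]
  obtain ⟨hr, hmn1⟩ := EUF.Iv_eq_iff he0 (by omega) (by omega) hIvEq
  have hsum : m + n = m' + n' := by omega
  have hFS : ((EUF.IvF pK e m ×ˢ EUF.IvF qK e n).image (fun p => p.1 - p.2))
      = ((EUF.IvF pL e m' ×ˢ EUF.IvF qL e n').image (fun p => p.1 - p.2)) := by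
    apply Finset.coe_injective
    rw [EUF.coe_image_sub, EUF.coe_image_sub]
    show {w : Z2 | ∃ x ∈ EUF.Iv pK e m, ∃ y ∈ EUF.Iv qK e n, w = x - y}
      = {w : Z2 | ∃ x ∈ EUF.Iv pL e m', ∃ y ∈ EUF.Iv qL e n', w = x - y}
    rw [← hA, ← hB, ← hA', ← hB']
    exact hTop
  have hprod : m * n = m' * n' := by
    have h1 := EUF.sum_cov hKfin he0 hA hB
    have h2 := EUF.sum_cov hLfin he0 hA' hB'
    rw [← h1, ← h2, hFS]
    exact Finset.sum_congr rfl (fun w _ => by rw [hcov])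
  rcases EUF.pair_eq hsum hprod with ⟨h1, h2⟩ | ⟨h1, h2⟩
  · subst h1
    subst h2
    have hpq : pK - qK = pL - qL := by linear_combination hr
    obtain ⟨e1, e2⟩ := EUF.final_step hA' hB' hpq
    refine ⟨(fun x => x + (pK - pL)) '' L, ⟨pK - pL, Or.inl rfl⟩, ?_, ?_⟩
    · rw [hA, e1]
    · rw [hB, e2]
  · set M : Set Z2 := (fun x => -x) '' L with hM
    have hMA : suppSet M (toR u) = EUF.Iv (-qL - ((n' : ℤ) - 1) • e) e n' := by
      rw [hM, EUF.suppSet_neg, hB', EUF.Iv_neg _ _ hn']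
    have hMB : suppSet M (toR (-u)) = EUF.Iv (-pL - ((m' : ℤ) - 1) • e) e m' := by
      rw [hM, EUF.suppSet_neg, neg_neg, hA', EUF.Iv_neg _ _ hm']
    subst h1
    subst h2
    have hpq : pK - qK = (-qL - ((m : ℤ) - 1) • e) - (-pL - ((n : ℤ) - 1) • e) := by
      linear_combination hr
    obtain ⟨e1, e2⟩ := EUF.final_step hMA hMB hpq
    set t : Z2 := pK - (-qL - ((m : ℤ) - 1) • e) with ht
    refine ⟨(fun x => x + t) '' M, ⟨t, Or.inr ?_⟩, ?_, ?_⟩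
    · rw [hM, Set.image_image]
      apply Set.image_congr'
      intro x
      ring
    · rw [hA, e1]
    · rw [hB, e2]
end

section
/- With T, w₁, w₂, and 𝕃 as fixed, one has ℤ² = 𝕃 ⊕ T: every point of ℤ² can be written in exactly one way as w + t with w ∈ 𝕃 and t ∈ T. -/
open scoped Pointwise ENNReal

private lemma small_mul_eq_zero' {d N c : ℤ} (hN : 0 < N) (h : d * N = c)
    (h1 : -N < c) (h2 : c < N) : d = 0 ∧ c = 0 := by
  have hd : d = 0 := by
    rcases lt_trichotomy d 0 with hd' | hd' | hd'
    · exfalso; nlinarith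
    · exact hd'
    · exfalso; nlinarith
  exact ⟨hd, by simp [hd] at h; omega⟩

/-- `ℤ² = 𝕃 ⊕ T`: every point of `ℤ²` has a unique representation
`w + t` with `w ∈ 𝕃` and `t ∈ T`. -/
theorem lattice_T_decomposition
    (k l : ℤ) (hl : 0 ≤ l) (hkl : l < k) :
    ∀ p : Z2, ∃! q : Z2 × Z2, q.1 ∈ ZLat k l ∧ q.2 ∈ Tset k l ∧ p = q.1 + q.2 := by
  intro p
  obtain ⟨x, y⟩ := p
  have hNpos : (0 : ℤ) < k + l + 2 := by omega
  set r := (x - y * (l + 1)) % (k + l + 2) with hrdef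
  set q0 := (x - y * (l + 1)) / (k + l + 2) with hqdef
  have hdiv : (k + l + 2) * q0 + r = x - y * (l + 1) := Int.mul_ediv_add_emod _ _
  have hr0 : 0 ≤ r := Int.emod_nonneg _ (by omega)
  have hrN : r < k + l + 2 := Int.emod_lt_of_pos _ hNpos
  have huniq : ∀ q q' : Z2 × Z2,
      (q.1 ∈ ZLat k l ∧ q.2 ∈ Tset k l ∧ (x, y) = q.1 + q.2) →
      (q'.1 ∈ ZLat k l ∧ q'.2 ∈ Tset k l ∧ (x, y) = q'.1 + q'.2) → q = q' := by
    rintro ⟨⟨wx, wy⟩, ⟨tx, ty⟩⟩ ⟨⟨wx', wy'⟩, ⟨tx', ty'⟩⟩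
      ⟨⟨a, b, hab⟩, ht, hs⟩ ⟨⟨a', b', hab'⟩, ht', hs'⟩
    simp only [ZLat, wOne, wTwo, Prod.ext_iff, Prod.smul_mk, smul_eq_mul,
      Prod.mk_add_mk, Prod.mk.injEq] at hab hab' hs hs'
    obtain ⟨hab1, hab2⟩ := hab
    obtain ⟨hab1', hab2'⟩ := hab'
    obtain ⟨hs1, hs2⟩ := hs
    obtain ⟨hs1', hs2'⟩ := hs'
    simp only [Tset, T1set, T2set, Set.mem_union, Set.mem_setOf_eq] at ht ht'
    have key : (a - a') * (k + l + 2) = (ty' - ty) * (l + 1) + tx - tx' := by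
      linear_combination hs1 + hab1 - hs1' - hab1' - (l + 1) * (hs2 + hab2 - hs2' - hab2')
    have hfin : a = a' ∧ tx = tx' ∧ ty = ty' := by
      rcases ht with ⟨h1, h2, h3⟩ | ⟨h1, h2, h3⟩ <;>
          rcases ht' with ⟨h1', h2', h3'⟩ | ⟨h1', h2', h3'⟩ <;> subst h3 <;> subst h3'
      · have key' : (a - a') * (k + l + 2) = tx - tx' := by linear_combination key
        obtain ⟨hd0, hc0⟩ := small_mul_eq_zero' hNpos key' (by omega) (by omega)
        omega
      · have key' : (a - a') * (k + l + 2) = l + 1 + tx - tx' := by linear_combination key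
        obtain ⟨hd0, hc0⟩ := small_mul_eq_zero' hNpos key' (by omega) (by omega)
        omega
      · have key' : (a - a') * (k + l + 2) = -(l + 1) + tx - tx' := by linear_combination key
        obtain ⟨hd0, hc0⟩ := small_mul_eq_zero' hNpos key' (by omega) (by omega)
        omega
      · have key' : (a - a') * (k + l + 2) = tx - tx' := by linear_combination key
        obtain ⟨hd0, hc0⟩ := small_mul_eq_zero' hNpos key' (by omega) (by omega)
        omega
    obtain ⟨haa, htx, hty⟩ := hfin
    have hbb : b = b' := by omega
    subst haa; subst hbb; subst htx; subst hty
    have : wx = wx' := by rw [hab1, hab1']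
    have : wy = wy' := by omega
    simp_all
  have hex : ∃ q : Z2 × Z2, q.1 ∈ ZLat k l ∧ q.2 ∈ Tset k l ∧ (x, y) = q.1 + q.2 := by
    by_cases hrk : r ≤ k
    · refine ⟨((x - r, y), (r, 0)), ⟨-q0, y + q0, ?_⟩, by simp only [Tset, Set.mem_union, T1set, T2set, Set.mem_setOf_eq]; exact Or.inl ⟨hr0, hrk, trivial⟩, ?_⟩
      · simp only [wOne, wTwo, Prod.smul_mk, smul_eq_mul, Prod.mk_add_mk, Prod.mk.injEq]
        constructor
        · linear_combination -hdiv
        · ring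
      · simp only [Prod.mk_add_mk, Prod.mk.injEq]
        constructor <;> ring
    · refine ⟨((x - (r - k - 1), y - 1), (r - k - 1, 1)),
        ⟨-(q0 + 1), y + q0, ?_⟩, by simp only [Tset, Set.mem_union, T1set, T2set, Set.mem_setOf_eq]; exact Or.inr ⟨by omega, by omega, trivial⟩, ?_⟩
      · simp only [wOne, wTwo, Prod.smul_mk, smul_eq_mul, Prod.mk_add_mk, Prod.mk.injEq]
        constructor
        · linear_combination -hdiv
        · ring
      · simp only [Prod.mk_add_mk, Prod.mk.injEq]
        constructor <;> ring
  obtain ⟨q, hq⟩ := hex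
  exact ⟨q, hq, fun q' hq' => huniq q' q hq' hq⟩
end

section
/- Let S ⊆ ℤ² be such that the sum of S and T is direct and K := S ⊕ T is lattice-convex. Then for each h ∈ ℤ the elements of 𝒯₁ and 𝒯₂ alternate in 𝒯(h) with respect to the left-to-right order: for any two distinct J, J' ∈ 𝒯(h) that both belong to 𝒯₁ (respectively, both belong to 𝒯₂) with J strictly preceding J', there exists J'' ∈ 𝒯(h) belonging to 𝒯₂ (respectively, to 𝒯₁) that strictly follows J and strictly precedes J'. -/
open scoped Pointwise ENNReal

section AuxAlternate

/-- Horizontal sections of a lattice-convex set are "intervals". -/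
lemma row_convex {K : Set Z2} (hK : latticeConvex K) {x1 x2 x h : ℤ}
    (h1 : ((x1, h) : Z2) ∈ K) (h2 : ((x2, h) : Z2) ∈ K) (hx1 : x1 ≤ x) (hx2 : x ≤ x2) :
    ((x, h) : Z2) ∈ K := by
  obtain ⟨C, hC, rfl⟩ := hK
  simp only [Set.mem_preimage] at *
  rcases eq_or_lt_of_le hx1 with rfl | hlt
  · exact h1
  have hx12 : x1 < x2 := lt_of_lt_of_le hlt hx2
  have hne : (x2 : ℝ) - (x1 : ℝ) ≠ 0 := by
    have : (x1 : ℝ) < (x2 : ℝ) := by exact_mod_cast hx12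
    linarith
  have hxr1 : (x1 : ℝ) < (x : ℝ) := by exact_mod_cast hlt
  have hxr2 : (x : ℝ) ≤ (x2 : ℝ) := by exact_mod_cast hx2
  have h12 : (x1 : ℝ) < (x2 : ℝ) := by exact_mod_cast hx12
  have hanneg : (0:ℝ) ≤ ((x2 : ℝ) - (x : ℝ)) / ((x2 : ℝ) - (x1 : ℝ)) := by
    apply div_nonneg <;> linarith
  have hbnneg : (0:ℝ) ≤ ((x : ℝ) - (x1 : ℝ)) / ((x2 : ℝ) - (x1 : ℝ)) := by
    apply div_nonneg <;> linarith
  have hab : ((x2 : ℝ) - (x : ℝ)) / ((x2 : ℝ) - (x1 : ℝ))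
      + ((x : ℝ) - (x1 : ℝ)) / ((x2 : ℝ) - (x1 : ℝ)) = 1 := by
    field_simp
    ring
  have hmem := hC h1 h2 hanneg hbnneg hab
  have heq : (((x2 : ℝ) - (x : ℝ)) / ((x2 : ℝ) - (x1 : ℝ))) • toR (x1, h)
      + (((x : ℝ) - (x1 : ℝ)) / ((x2 : ℝ) - (x1 : ℝ))) • toR (x2, h) = toR (x, h) := by
    simp only [toR, Prod.smul_mk, smul_eq_mul, Prod.mk_add_mk, Prod.mk.injEq]
    constructor
    · field_simp
      ring
    · field_simp
      ring
  rwa [heq] at hmem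

lemma mem_transl_T1 {k : ℤ} {s p : Z2} :
    p ∈ transl s (T1set k) ↔ s.1 ≤ p.1 ∧ p.1 ≤ s.1 + k ∧ p.2 = s.2 := by
  constructor
  · rintro ⟨q, ⟨hq0, hqk, hq2⟩, rfl⟩
    exact ⟨by show s.1 ≤ s.1 + q.1; omega, by show s.1 + q.1 ≤ s.1 + k; omega,
      by show s.2 + q.2 = s.2; omega⟩
  · rintro ⟨h1, h2, h3⟩
    refine ⟨p - s, ⟨?_, ?_, ?_⟩, by simp⟩
    · simp only [Prod.fst_sub]; omega
    · simp only [Prod.fst_sub]; omega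
    · simp only [Prod.snd_sub]; omega

lemma mem_transl_T2 {l : ℤ} {s p : Z2} :
    p ∈ transl s (T2set l) ↔ s.1 ≤ p.1 ∧ p.1 ≤ s.1 + l ∧ p.2 = s.2 + 1 := by
  constructor
  · rintro ⟨q, ⟨hq0, hql, hq2⟩, rfl⟩
    exact ⟨by show s.1 ≤ s.1 + q.1; omega, by show s.1 + q.1 ≤ s.1 + l; omega,
      by show s.2 + q.2 = s.2 + 1; omega⟩
  · rintro ⟨h1, h2, h3⟩
    refine ⟨p - s, ⟨?_, ?_, ?_⟩, by simp⟩
    · simp only [Prod.fst_sub]; omega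
    · simp only [Prod.fst_sub]; omega
    · simp only [Prod.snd_sub]; omega

lemma memK_T1' {k l : ℤ} {S : Set Z2} {s : Z2} (hs : s ∈ S) {i : ℤ}
    (h0 : 0 ≤ i) (hk : i ≤ k) : ((s.1 + i, s.2) : Z2) ∈ S + Tset k l := by
  have he : ((s.1 + i, s.2) : Z2) = s + (i, 0) := by
    apply Prod.ext <;> simp
  rw [he]
  exact Set.add_mem_add hs (Or.inl ⟨h0, hk, rfl⟩)

lemma memK_T2' {k l : ℤ} {S : Set Z2} {s : Z2} (hs : s ∈ S) {i : ℤ}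
    (h0 : 0 ≤ i) (hli : i ≤ l) : ((s.1 + i, s.2 + 1) : Z2) ∈ S + Tset k l := by
  have he : ((s.1 + i, s.2 + 1) : Z2) = s + (i, 1) := by
    apply Prod.ext <;> simp
  rw [he]
  exact Set.add_mem_add hs (Or.inr ⟨h0, hli, rfl⟩)

/-- No two translates of `T₁` occupy adjacent intervals in the same row. -/
lemma no_adj_T1 {k l : ℤ} (hl : 0 ≤ l) (hkl : l < k) {S : Set Z2}
    (hdir : directSum S (Tset k l)) (hconv : latticeConvex (S + Tset k l))
    {s t : Z2} (hs : s ∈ S) (ht : t ∈ S) (h2 : t.2 = s.2) (h1 : t.1 = s.1 + k + 1) :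
    False := by
  -- the point (s.1 + l + 1, s.2 + 1) lies in K by convexity in row s.2 + 1
  have hA : ((s.1 + l, s.2 + 1) : Z2) ∈ S + Tset k l := memK_T2' hs hl le_rfl
  have hB : ((s.1 + k + 1, s.2 + 1) : Z2) ∈ S + Tset k l := by
    have := memK_T2' (l := l) (k := k) ht le_rfl hl
    rw [h1, h2] at this
    simpa using this
  have hqK : ((s.1 + l + 1, s.2 + 1) : Z2) ∈ S + Tset k l :=
    row_convex hconv hA hB (by omega) (by omega)
  rw [Set.mem_add] at hqK
  obtain ⟨r, hr, u, hu, hru⟩ := hqK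
  have hr1 : r.1 + u.1 = s.1 + l + 1 := by
    have := congrArg Prod.fst hru; simpa using this
  have hr2 : r.2 + u.2 = s.2 + 1 := by
    have := congrArg Prod.snd hru; simpa using this
  rcases hu with ⟨hu0, huk, hu2⟩ | ⟨hu0, hul, hu2⟩
  · -- u ∈ T1set k, u.2 = 0
    by_cases hc : l + 1 ≤ u.1
    · -- overlap of r + T1 with s + T2 at (s.1 + l, s.2 + 1)
      have heq : s + ((l : ℤ), (1 : ℤ)) = r + (u.1 - 1, 0) := by
        apply Prod.ext <;> simp <;> omega
      obtain ⟨-, habs⟩ := hdir s hs r hr (l, 1) (Or.inr ⟨hl, le_rfl, rfl⟩)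
        (u.1 - 1, 0) (Or.inl ⟨by omega, by omega, rfl⟩) heq
      exact absurd (congrArg Prod.snd habs) (by simp)
    · -- overlap of r + T1 with t + T2 at (s.1 + k + 1, s.2 + 1)
      have heq : t + ((0 : ℤ), (1 : ℤ)) = r + (s.1 + k + 1 - r.1, 0) := by
        apply Prod.ext <;> simp <;> omega
      obtain ⟨-, habs⟩ := hdir t ht r hr (0, 1) (Or.inr ⟨le_rfl, hl, rfl⟩)
        (s.1 + k + 1 - r.1, 0) (Or.inl ⟨by omega, by omega, rfl⟩) heq
      exact absurd (congrArg Prod.snd habs) (by simp)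
  · -- u ∈ T2set l, u.2 = 1, so r + T1 overlaps s + T1 at (r.1, s.2)
    have heq : s + ((r.1 - s.1 : ℤ), (0 : ℤ)) = r + (0, 0) := by
      apply Prod.ext <;> simp <;> omega
    obtain ⟨hst, habs⟩ := hdir s hs r hr (r.1 - s.1, 0) (Or.inl ⟨by omega, by omega, rfl⟩)
      (0, 0) (Or.inl ⟨le_rfl, by omega, rfl⟩) heq
    have : r.1 - s.1 = 0 := by
      have := congrArg Prod.fst habs; simpa using this
    omega

end AuxAlternate

/-- in every horizontal section the members of `𝒯₁` and `𝒯₂`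
alternate. -/
theorem sections_alternate
    (k l : ℤ) (hl : 0 ≤ l) (hkl : l < k)
    (S : Set Z2) (hdir : directSum S (Tset k l))
    (hconv : latticeConvex (S + Tset k l)) :
    ∀ h : ℤ, ∀ J J' : Set Z2, J ∈ TcalSet k l S h → J' ∈ TcalSet k l S h → J ≠ J' →
      (((∃ s ∈ S, J = transl s (T1set k)) → (∃ s ∈ S, J' = transl s (T1set k)) →
        precedes J J' →
        ∃ J'' ∈ TcalSet k l S h, (∃ s ∈ S, J'' = transl s (T2set l)) ∧
          precedes J J'' ∧ precedes J'' J') ∧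
      ((∃ s ∈ S, J = transl s (T2set l)) → (∃ s ∈ S, J' = transl s (T2set l)) →
        precedes J J' →
        ∃ J'' ∈ TcalSet k l S h, (∃ s ∈ S, J'' = transl s (T1set k)) ∧
          precedes J J'' ∧ precedes J'' J')) := by
  intro h J J' hJ hJ' hne
  have hk0 : (0:ℤ) ≤ k := by omega
  constructor
  · rintro ⟨s, hs, rfl⟩ ⟨s', hs', rfl⟩ hprec
    have hs2 : s.2 = h := by
      have hmem : s ∈ transl s (T1set k) := mem_transl_T1.mpr ⟨le_rfl, by omega, rfl⟩
      exact (hJ.2 hmem).2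
    have hs'2 : s'.2 = h := by
      have hmem : s' ∈ transl s' (T1set k) := mem_transl_T1.mpr ⟨le_rfl, by omega, rfl⟩
      exact (hJ'.2 hmem).2
    have hlt : s.1 + k < s'.1 := by
      have hp : ((s.1 + k, s.2) : Z2) ∈ transl s (T1set k) :=
        mem_transl_T1.mpr ⟨by omega, by omega, rfl⟩
      have hq : s' ∈ transl s' (T1set k) := mem_transl_T1.mpr ⟨le_rfl, by omega, rfl⟩
      exact hprec _ hp _ hq
    have hA : ((s.1 + k, h) : Z2) ∈ S + Tset k l := by
      have := memK_T1' (l := l) hs hk0 le_rfl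
      rwa [hs2] at this
    have hB : ((s'.1, h) : Z2) ∈ S + Tset k l := by
      have := memK_T1' (l := l) hs' le_rfl hk0
      rw [hs'2] at this
      simpa using this
    have hpK : ((s.1 + k + 1, h) : Z2) ∈ S + Tset k l :=
      row_convex hconv hA hB (by omega) (by omega)
    rw [Set.mem_add] at hpK
    obtain ⟨t, ht, u, hu, htu⟩ := hpK
    have ht1 : t.1 + u.1 = s.1 + k + 1 := by
      have := congrArg Prod.fst htu; simpa using this
    have ht2 : t.2 + u.2 = h := by
      have := congrArg Prod.snd htu; simpa using this
    rcases hu with ⟨hu0, huk, hu2⟩ | ⟨hu0, hul, hu2⟩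
    · -- u ∈ T₁ : two adjacent T₁ tiles, impossible
      exfalso
      have htt : t.1 = s.1 + k + 1 := by
        by_contra hcon
        have hle : t.1 ≤ s.1 + k := by omega
        have heq : s + ((k : ℤ), (0 : ℤ)) = t + (s.1 + k - t.1, 0) := by
          apply Prod.ext <;> simp <;> omega
        obtain ⟨hst, habs⟩ := hdir s hs t ht (k, 0) (Or.inl ⟨hk0, le_rfl, rfl⟩)
          (s.1 + k - t.1, 0) (Or.inl ⟨by omega, by omega, rfl⟩) heq
        have hfst : s.1 = t.1 := congrArg Prod.fst hst
        omega
      exact no_adj_T1 hl hkl hdir hconv hs ht (by omega) htt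
    · -- u ∈ T₂ : the tile t + T₂ is the desired one
      have htt : t.1 = s.1 + k + 1 := by
        by_contra hcon
        have hle : t.1 ≤ s.1 + k := by omega
        have heq : s + ((k : ℤ), (0 : ℤ)) = t + (s.1 + k - t.1, 1) := by
          apply Prod.ext <;> simp <;> omega
        obtain ⟨-, habs⟩ := hdir s hs t ht (k, 0) (Or.inl ⟨hk0, le_rfl, rfl⟩)
          (s.1 + k - t.1, 1) (Or.inr ⟨by omega, by omega, rfl⟩) heq
        exact absurd (congrArg Prod.snd habs) (by simp)
      have hbound : t.1 + l < s'.1 := by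
        by_contra hcon
        push_neg at hcon
        have heq : s' + ((0 : ℤ), (0 : ℤ)) = t + (s'.1 - t.1, 1) := by
          apply Prod.ext <;> simp <;> omega
        obtain ⟨-, habs⟩ := hdir s' hs' t ht (0, 0) (Or.inl ⟨le_rfl, hk0, rfl⟩)
          (s'.1 - t.1, 1) (Or.inr ⟨by omega, by omega, rfl⟩) heq
        exact absurd (congrArg Prod.snd habs) (by simp)
      refine ⟨transl t (T2set l), ⟨⟨t, ht, Or.inr rfl⟩, ?_⟩, ⟨t, ht, rfl⟩, ?_, ?_⟩
      · intro q hq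
        rw [mem_transl_T2] at hq
        refine ⟨?_, by omega⟩
        have hq' : q = ((t.1 + (q.1 - t.1), t.2 + 1) : Z2) := by
          apply Prod.ext <;> simp <;> omega
        rw [hq']
        exact memK_T2' ht (by omega) (by omega)
      · intro p hp q hq
        rw [mem_transl_T1] at hp
        rw [mem_transl_T2] at hq
        omega
      · intro p hp q hq
        rw [mem_transl_T2] at hp
        rw [mem_transl_T1] at hq
        omega
  · rintro ⟨s, hs, rfl⟩ ⟨s', hs', rfl⟩ hprec
    have hs2 : s.2 + 1 = h := by
      have hmem : ((s.1, s.2 + 1) : Z2) ∈ transl s (T2set l) :=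
        mem_transl_T2.mpr ⟨le_rfl, by omega, rfl⟩
      exact (hJ.2 hmem).2
    have hs'2 : s'.2 + 1 = h := by
      have hmem : ((s'.1, s'.2 + 1) : Z2) ∈ transl s' (T2set l) :=
        mem_transl_T2.mpr ⟨le_rfl, by omega, rfl⟩
      exact (hJ'.2 hmem).2
    have hlt : s.1 + l < s'.1 := by
      have hp : ((s.1 + l, s.2 + 1) : Z2) ∈ transl s (T2set l) :=
        mem_transl_T2.mpr ⟨by omega, by omega, rfl⟩
      have hq : ((s'.1, s'.2 + 1) : Z2) ∈ transl s' (T2set l) :=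
        mem_transl_T2.mpr ⟨le_rfl, by omega, rfl⟩
      exact hprec ((s.1 + l, s.2 + 1) : Z2) hp ((s'.1, s'.2 + 1) : Z2) hq
    have hA : ((s.1 + l, h) : Z2) ∈ S + Tset k l := by
      have := memK_T2' (k := k) hs hl le_rfl
      rwa [hs2] at this
    have hB : ((s'.1, h) : Z2) ∈ S + Tset k l := by
      have := memK_T2' (k := k) hs' le_rfl hl
      rw [hs'2] at this
      simpa using this
    have hpK : ((s.1 + l + 1, h) : Z2) ∈ S + Tset k l :=
      row_convex hconv hA hB (by omega) (by omega)
    rw [Set.mem_add] at hpK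
    obtain ⟨t, ht, u, hu, htu⟩ := hpK
    have ht1 : t.1 + u.1 = s.1 + l + 1 := by
      have := congrArg Prod.fst htu; simpa using this
    have ht2 : t.2 + u.2 = h := by
      have := congrArg Prod.snd htu; simpa using this
    rcases hu with ⟨hu0, huk, hu2⟩ | ⟨hu0, hul, hu2⟩
    · -- u ∈ T₁ : the tile t + T₁ is the desired one
      have htt : t.1 = s.1 + l + 1 := by
        by_contra hcon
        have hle : t.1 ≤ s.1 + l := by omega
        have heq : s + ((l : ℤ), (1 : ℤ)) = t + (s.1 + l - t.1, 0) := by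
          apply Prod.ext <;> simp <;> omega
        obtain ⟨-, habs⟩ := hdir s hs t ht (l, 1) (Or.inr ⟨hl, le_rfl, rfl⟩)
          (s.1 + l - t.1, 0) (Or.inl ⟨by omega, by omega, rfl⟩) heq
        exact absurd (congrArg Prod.snd habs) (by simp)
      have hbound : t.1 + k < s'.1 := by
        by_contra hcon
        push_neg at hcon
        have heq : s' + ((0 : ℤ), (1 : ℤ)) = t + (s'.1 - t.1, 0) := by
          apply Prod.ext <;> simp <;> omega
        obtain ⟨-, habs⟩ := hdir s' hs' t ht (0, 1) (Or.inr ⟨le_rfl, hl, rfl⟩)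
          (s'.1 - t.1, 0) (Or.inl ⟨by omega, by omega, rfl⟩) heq
        exact absurd (congrArg Prod.snd habs) (by simp)
      refine ⟨transl t (T1set k), ⟨⟨t, ht, Or.inl rfl⟩, ?_⟩, ⟨t, ht, rfl⟩, ?_, ?_⟩
      · intro q hq
        rw [mem_transl_T1] at hq
        refine ⟨?_, by omega⟩
        have hq' : q = ((t.1 + (q.1 - t.1), t.2) : Z2) := by
          apply Prod.ext <;> simp <;> omega
        rw [hq']
        exact memK_T1' ht (by omega) (by omega)
      · intro p hp q hq
        rw [mem_transl_T2] at hp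
        rw [mem_transl_T1] at hq
        omega
      · intro p hp q hq
        rw [mem_transl_T1] at hp
        rw [mem_transl_T2] at hq
        omega
    · -- u ∈ T₂ : two adjacent T₂ tiles, impossible
      exfalso
      have htt : t.1 = s.1 + l + 1 := by
        by_contra hcon
        have hle : t.1 ≤ s.1 + l := by omega
        have heq : s + ((l : ℤ), (1 : ℤ)) = t + (s.1 + l - t.1, 1) := by
          apply Prod.ext <;> simp <;> omega
        obtain ⟨hst, habs⟩ := hdir s hs t ht (l, 1) (Or.inr ⟨hl, le_rfl, rfl⟩)
          (s.1 + l - t.1, 1) (Or.inr ⟨by omega, by omega, rfl⟩) heq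
        have hfst : s.1 = t.1 := congrArg Prod.fst hst
        omega
      -- then s + T₁ and t + T₁ overlap
      have heq : s + ((l + 1 : ℤ), (0 : ℤ)) = t + (0, 0) := by
        apply Prod.ext <;> simp <;> omega
      obtain ⟨hst, -⟩ := hdir s hs t ht (l + 1, 0) (Or.inl ⟨by omega, by omega, rfl⟩)
        (0, 0) (Or.inl ⟨le_rfl, hk0, rfl⟩) heq
      have hfst : s.1 = t.1 := congrArg Prod.fst hst
      omega
end

section
/- Let S ⊆ ℤ² be such that the sum of S and T is direct and K := S ⊕ T is lattice-convex. Let h ∈ ℤ be such that 𝒯(h) consists of precisely one element, namely s + T₂ with s ∈ S, and 𝒯(h+1) consists of precisely one element, namely s' + T₁ with s' ∈ S. Then k − ℓ = 1 and s' − s = (−1, 2) = w₁ + w₂. -/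
open scoped Pointwise ENNReal

/-- if `𝒯(h) = {s + T₂}` and `𝒯(h+1) = {s' + T₁}`, then `k − ℓ = 1`
and `s' − s = (−1, 2) = w₁ + w₂`. -/
theorem consecutive_short_sections
    (k l : ℤ) (hl : 0 ≤ l) (hkl : l < k)
    (S : Set Z2) (hdir : directSum S (Tset k l))
    (hconv : latticeConvex (S + Tset k l))
    (h : ℤ) (s s' : Z2) (hs : s ∈ S) (hs' : s' ∈ S)
    (hh : TcalSet k l S h = {transl s (T2set l)})
    (hh' : TcalSet k l S (h + 1) = {transl s' (T1set k)}) :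
    k - l = 1 ∧ s' - s = ((-1 : ℤ), (2 : ℤ)) ∧ s' - s = wOne k + wTwo l := by

  obtain ⟨CC, hCC, hKeq⟩ := hconv
  have hk1 : (1:ℤ) ≤ k := by omega
  -- basic membership helpers
  have hT1 : ∀ j : ℤ, 0 ≤ j → j ≤ k → ((j, 0) : Z2) ∈ Tset k l := by
    intro j h0 hk; exact Or.inl ⟨h0, hk, rfl⟩
  have memK : ∀ x ∈ S, ∀ t ∈ Tset k l, x + t ∈ S + Tset k l := by
    intro x hx t ht; exact Set.add_mem_add hx ht
  have hmem1 : transl s (T2set l) ∈ TcalSet k l S h := by rw [hh]; rfl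
  have hmem2 : transl s' (T1set k) ∈ TcalSet k l S (h+1) := by rw [hh']; rfl
  have hs2 : s.2 + 1 = h := by
    have := (hmem1.2 ⟨((0:ℤ),(1:ℤ)), ⟨le_refl 0, hl, rfl⟩, rfl⟩).2
    simpa using this
  have hs'2 : s'.2 = h + 1 := by
    have := (hmem2.2 ⟨((0:ℤ),(0:ℤ)), ⟨le_refl 0, by omega, rfl⟩, rfl⟩).2
    simpa using this
  -- tiles contained in sections
  have tileT1 : ∀ x ∈ S, ∀ H : ℤ, x.2 = H → transl x (T1set k) ∈ TcalSet k l S H := by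
    intro x hx H hx2
    refine ⟨⟨x, hx, Or.inl rfl⟩, ?_⟩
    rintro q ⟨t, ht, rfl⟩
    refine ⟨memK x hx t (Or.inl ht), ?_⟩
    show (x + t).2 = H
    rw [Prod.snd_add, ht.2.2, hx2, add_zero]
  have tileT2 : ∀ x ∈ S, ∀ H : ℤ, x.2 + 1 = H → transl x (T2set l) ∈ TcalSet k l S H := by
    intro x hx H hx2
    refine ⟨⟨x, hx, Or.inr rfl⟩, ?_⟩
    rintro q ⟨t, ht, rfl⟩
    refine ⟨memK x hx t (Or.inr ht), ?_⟩
    show (x + t).2 = H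
    rw [Prod.snd_add, ht.2.2, hx2]
  -- a T1-tile is never a T2-tile (widths differ)
  have ne12 : ∀ x y : Z2, transl x (T1set k) ≠ transl y (T2set l) := by
    intro x y hEq
    have h1 : x + ((0:ℤ),(0:ℤ)) ∈ transl x (T1set k) := ⟨((0:ℤ),(0:ℤ)), ⟨le_refl 0, by omega, rfl⟩, rfl⟩
    have h2 : x + ((k:ℤ),(0:ℤ)) ∈ transl x (T1set k) := ⟨((k:ℤ),(0:ℤ)), ⟨by omega, le_refl k, rfl⟩, rfl⟩
    rw [hEq] at h1 h2
    obtain ⟨t1, ht1, he1⟩ := h1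
    obtain ⟨t2, ht2, he2⟩ := h2
    have e1 : y.1 + t1.1 = x.1 + 0 := congrArg Prod.fst he1
    have e2 : y.1 + t2.1 = x.1 + k := congrArg Prod.fst he2
    have b1 := ht1.1; have b2 := ht1.2.1; have b3 := ht2.1; have b4 := ht2.2.1
    omega
  -- characterization of the section at height h
  have hIh : ∀ p ∈ S + Tset k l, p.2 = h → s.1 ≤ p.1 ∧ p.1 ≤ s.1 + l := by
    intro p hp hph
    rw [Set.mem_add] at hp
    obtain ⟨x, hx, t, ht, rfl⟩ := hp
    rcases ht with ht1 | ht2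
    · exfalso
      have hx2 : x.2 = h := by
        have : x.2 + t.2 = h := hph
        rw [ht1.2.2] at this; omega
      have hmem := tileT1 x hx h hx2
      rw [hh] at hmem
      exact ne12 x s (Set.eq_of_mem_singleton hmem)
    · have hx2 : x.2 + 1 = h := by
        have : x.2 + t.2 = h := hph
        rw [ht2.2.2] at this; omega
      have hmem := tileT2 x hx h hx2
      rw [hh] at hmem
      have hEq := Set.eq_of_mem_singleton hmem
      have hmemp : x + t ∈ transl s (T2set l) := hEq ▸ ⟨t, ht2, rfl⟩
      obtain ⟨t', ht', he⟩ := hmemp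
      have e : s.1 + t'.1 = x.1 + t.1 := congrArg Prod.fst he
      have b1 := ht'.1; have b2 := ht'.2.1
      have hxt : (x + t).1 = x.1 + t.1 := rfl
      constructor <;> omega
  -- characterization of the section at height h+1
  have hIh1 : ∀ p ∈ S + Tset k l, p.2 = h + 1 → s'.1 ≤ p.1 ∧ p.1 ≤ s'.1 + k := by
    intro p hp hph
    rw [Set.mem_add] at hp
    obtain ⟨x, hx, t, ht, rfl⟩ := hp
    rcases ht with ht1 | ht2
    · have hx2 : x.2 = h + 1 := by
        have : x.2 + t.2 = h + 1 := hph
        rw [ht1.2.2] at this; omega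
      have hmem := tileT1 x hx (h+1) hx2
      rw [hh'] at hmem
      have hEq := Set.eq_of_mem_singleton hmem
      have hmemp : x + t ∈ transl s' (T1set k) := hEq ▸ ⟨t, ht1, rfl⟩
      obtain ⟨t', ht', he⟩ := hmemp
      have e : s'.1 + t'.1 = x.1 + t.1 := congrArg Prod.fst he
      have b1 := ht'.1; have b2 := ht'.2.1
      have hxt : (x + t).1 = x.1 + t.1 := rfl
      constructor <;> omega
    · exfalso
      have hx2 : x.2 + 1 = h + 1 := by
        have : x.2 + t.2 = h + 1 := hph
        rw [ht2.2.2] at this; omega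
      have hmem := tileT2 x hx (h+1) hx2
      rw [hh'] at hmem
      exact ne12 s' x (Set.eq_of_mem_singleton hmem).symm
  -- midpoint convexity
  have mid : ∀ p q m : Z2, p ∈ S + Tset k l → q ∈ S + Tset k l →
      m.1 + m.1 = p.1 + q.1 → m.2 + m.2 = p.2 + q.2 → m ∈ S + Tset k l := by
    intro p q m hp hq h1 h2
    rw [hKeq] at hp hq ⊢
    rw [Set.mem_preimage] at hp hq ⊢
    have hm : toR m = (1/2 : ℝ) • toR p + (1/2 : ℝ) • toR q := by
      unfold toR
      have e1 : (m.1 : ℝ) = 1/2 * (p.1 : ℝ) + 1/2 * (q.1 : ℝ) := by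
        have : ((m.1 + m.1 : ℤ) : ℝ) = ((p.1 + q.1 : ℤ) : ℝ) := by rw [h1]
        push_cast at this; linarith
      have e2 : (m.2 : ℝ) = 1/2 * (p.2 : ℝ) + 1/2 * (q.2 : ℝ) := by
        have : ((m.2 + m.2 : ℤ) : ℝ) = ((p.2 + q.2 : ℤ) : ℝ) := by rw [h2]
        push_cast at this; linarith
      simp only [Prod.smul_mk, Prod.mk_add_mk, smul_eq_mul, Prod.mk.injEq]
      exact ⟨e1, e2⟩
    rw [hm]
    exact hCC hp hq (by norm_num) (by norm_num) (by norm_num)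
  -- key lattice points of K
  have ptK : ∀ j : ℤ, 0 ≤ j → j ≤ k → ((s.1 + j, s.2) : Z2) ∈ S + Tset k l := by
    intro j h0 hk'
    have hm := memK s hs ((j:ℤ),(0:ℤ)) (hT1 j h0 hk')
    have e : s + ((j:ℤ),(0:ℤ)) = ((s.1 + j, s.2) : Z2) := by
      ext <;> simp
    rwa [e] at hm
  have ptK' : ∀ j : ℤ, 0 ≤ j → j ≤ k → ((s'.1 + j, s'.2) : Z2) ∈ S + Tset k l := by
    intro j h0 hk'
    have hm := memK s' hs' ((j:ℤ),(0:ℤ)) (hT1 j h0 hk')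
    have e : s' + ((j:ℤ),(0:ℤ)) = ((s'.1 + j, s'.2) : Z2) := by
      ext <;> simp
    rwa [e] at hm
  -- parity case analysis
  rcases Int.even_or_odd (s.1 + s'.1) with ⟨d, hd⟩ | ⟨d, hd⟩
  · -- even case: contradiction
    exfalso
    have hm1 : s.1 ≤ d ∧ d ≤ s.1 + l :=
      hIh (d, h) (mid ((s.1 + 0, s.2) : Z2) ((s'.1 + 0, s'.2) : Z2) ((d, h) : Z2)
        (ptK 0 le_rfl (by omega)) (ptK' 0 le_rfl (by omega))
        (show d + d = s.1 + 0 + (s'.1 + 0) by omega)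
        (show h + h = s.2 + s'.2 by omega)) rfl
    have hm2 : s.1 ≤ d + k ∧ d + k ≤ s.1 + l :=
      hIh (d + k, h) (mid ((s.1 + k, s.2) : Z2) ((s'.1 + k, s'.2) : Z2) ((d + k, h) : Z2)
        (ptK k (by omega) le_rfl) (ptK' k (by omega) le_rfl)
        (show d + k + (d + k) = s.1 + k + (s'.1 + k) by omega)
        (show h + h = s.2 + s'.2 by omega)) rfl
    omega
  · -- odd case
    have hm1 : s.1 ≤ d + 1 ∧ d + 1 ≤ s.1 + l :=
      hIh (d + 1, h) (mid ((s.1 + 0, s.2) : Z2) ((s'.1 + 1, s'.2) : Z2) ((d + 1, h) : Z2)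
        (ptK 0 le_rfl (by omega)) (ptK' 1 (by omega) (by omega))
        (show d + 1 + (d + 1) = s.1 + 0 + (s'.1 + 1) by omega)
        (show h + h = s.2 + s'.2 by omega)) rfl
    have hm2 : s.1 ≤ d + k ∧ d + k ≤ s.1 + l :=
      hIh (d + k, h) (mid ((s.1 + k, s.2) : Z2) ((s'.1 + (k - 1), s'.2) : Z2) ((d + k, h) : Z2)
        (ptK k (by omega) le_rfl) (ptK' (k - 1) (by omega) (by omega))
        (show d + k + (d + k) = s.1 + k + (s'.1 + (k - 1)) by omega)
        (show h + h = s.2 + s'.2 by omega)) rfl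
    have hkeq : k = l + 1 := by omega
    have hx : s'.1 = s.1 - 1 := by omega
    refine ⟨by omega, ?_, ?_⟩
    · have e1 : (s' - s).1 = -1 := by show s'.1 - s.1 = -1; omega
      have e2 : (s' - s).2 = 2 := by show s'.2 - s.2 = 2; omega
      exact Prod.ext e1 e2
    · have e1 : (s' - s).1 = (wOne k + wTwo l).1 := by
        show s'.1 - s.1 = -k - 1 + (l + 1); omega
      have e2 : (s' - s).2 = (wOne k + wTwo l).2 := by
        show s'.2 - s.2 = 1 + 1; omega
      exact Prod.ext e1 e2
end

section
/- Let S ⊆ ℤ² be nonempty and such that the sum of S and T is direct and K := S ⊕ T is lattice-convex. Then the set {h ∈ ℤ : I_h ≠ ∅} is an interval of integers: if I_{h₁} ≠ ∅ and I_{h₂} ≠ ∅ and h₁ ≤ h ≤ h₂, then I_h ≠ ∅. -/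
open scoped Pointwise ENNReal

/-- Every point of `S + T` gives an adjacent horizontal pair in `S + T`
at height `p.2` or `p.2 - 1`. -/
lemma pairAt (k l : ℤ) (hl : 0 ≤ l) (hkl : l < k) (S : Set Z2) (p : Z2)
    (hp : p ∈ S + Tset k l) :
    ∃ a r : ℤ, r ≤ p.2 ∧ p.2 ≤ r + 1 ∧
      ((a, r) : Z2) ∈ S + Tset k l ∧ ((a + 1, r) : Z2) ∈ S + Tset k l := by
  rw [Set.mem_add] at hp
  obtain ⟨s, hs, t, ht, hst⟩ := hp
  have h00 : ((0, 0) : Z2) ∈ Tset k l := Or.inl ⟨le_refl _, by omega, rfl⟩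
  have h10 : ((1, 0) : Z2) ∈ Tset k l := Or.inl ⟨by norm_num, by omega, rfl⟩
  have ht2 : t.2 = 0 ∨ t.2 = 1 := by
    rcases ht with ht | ht
    · exact Or.inl ht.2.2
    · exact Or.inr ht.2.2
  have hp2 : p.2 = s.2 + t.2 := by rw [← hst]; rfl
  refine ⟨s.1, s.2, by omega, by omega, ?_, ?_⟩
  · have := Set.add_mem_add hs h00
    simpa [Prod.ext_iff, show ((0, 0) : Z2) = 0 from rfl] using this
  · have h' := Set.add_mem_add hs h10
    have he : ((s.1 + 1, s.2) : Z2) = s + (1, 0) := by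
      simp [Prod.ext_iff]
    rw [he]
    exact h'

/-- Convexity gives an integer point at each intermediate height between
two unit horizontal segments with integer endpoints. -/
lemma keyConv (C : Set R2) (hC : Convex ℝ C) (a b r₁ r₂ h : ℤ)
    (h1 : r₁ < h) (h2 : h < r₂)
    (ha : toR (a, r₁) ∈ C) (ha' : toR (a + 1, r₁) ∈ C)
    (hb : toR (b, r₂) ∈ C) (hb' : toR (b + 1, r₂) ∈ C) :
    ∃ m : ℤ, toR (m, h) ∈ C := by
  have hd : (0 : ℝ) < (r₂ : ℝ) - r₁ := by
    have : r₁ < r₂ := h1.trans h2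
    exact_mod_cast sub_pos.mpr (by exact_mod_cast this)
  set lam : ℝ := ((h : ℝ) - r₁) / ((r₂ : ℝ) - r₁) with hlam
  have hlam0 : 0 ≤ lam := by
    apply div_nonneg _ hd.le
    have : (r₁ : ℝ) < h := by exact_mod_cast h1
    linarith
  have hlam1 : lam ≤ 1 := by
    rw [hlam, div_le_one hd]
    have : (h : ℝ) < r₂ := by exact_mod_cast h2
    linarith
  have hlamd : lam * ((r₂ : ℝ) - r₁) = (h : ℝ) - r₁ := by
    rw [hlam, div_mul_cancel₀]
    exact ne_of_gt hd
  set c : ℝ := (1 - lam) * a + lam * b with hc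
  set m : ℤ := ⌈c⌉ with hm
  have hmu0 : c ≤ (m : ℝ) := Int.le_ceil c
  have hmu1 : (m : ℝ) ≤ c + 1 := by
    have := Int.ceil_lt_add_one c
    linarith
  set μ : ℝ := (m : ℝ) - c with hμ
  have hμ0 : 0 ≤ μ := by simp [hμ]; linarith
  have hμ1 : μ ≤ 1 := by simp [hμ]; linarith
  have hp1 : (1 - μ) • toR (a, r₁) + μ • toR (a + 1, r₁) ∈ C :=
    hC ha ha' (by linarith) hμ0 (by ring)
  have hp2 : (1 - μ) • toR (b, r₂) + μ • toR (b + 1, r₂) ∈ C :=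
    hC hb hb' (by linarith) hμ0 (by ring)
  have hfinal : (1 - lam) • ((1 - μ) • toR (a, r₁) + μ • toR (a + 1, r₁))
      + lam • ((1 - μ) • toR (b, r₂) + μ • toR (b + 1, r₂)) ∈ C :=
    hC hp1 hp2 (by linarith) hlam0 (by ring)
  refine ⟨m, ?_⟩
  convert hfinal using 1
  have : (m : ℝ) = c + μ := by rw [hμ]; ring
  simp only [toR, Prod.smul_mk, Prod.mk_add_mk, smul_eq_mul]
  refine Prod.ext ?_ ?_
  · simp only [Prod.fst]
    push_cast
    rw [this, hc]
    ring
  · simp only [Prod.snd]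
    have : (h : ℝ) = (1 - lam) * r₁ + lam * r₂ := by
      have := hlamd
      nlinarith [hlamd]
    rw [this]
    ring

/-- the set of heights of nonempty horizontal sections of `S ⊕ T`
is an interval of integers. -/
theorem sections_form_interval
    (k l : ℤ) (hl : 0 ≤ l) (hkl : l < k)
    (S : Set Z2) (hSne : S.Nonempty) (hdir : directSum S (Tset k l))
    (hconv : latticeConvex (S + Tset k l)) :
    ∀ h₁ h₂ h : ℤ, (sect (S + Tset k l) h₁).Nonempty → (sect (S + Tset k l) h₂).Nonempty →
      h₁ ≤ h → h ≤ h₂ → (sect (S + Tset k l) h).Nonempty := by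
  intro h₁ h₂ h hne1 hne2 hle1 hle2
  rcases eq_or_lt_of_le hle1 with rfl | hlt1
  · exact hne1
  rcases eq_or_lt_of_le hle2 with rfl | hlt2
  · exact hne2
  obtain ⟨C, hC, hK⟩ := hconv
  obtain ⟨p, hp, hp2⟩ := hne1
  obtain ⟨q, hq, hq2⟩ := hne2
  obtain ⟨a, r₁, har1, har1', hpa, hpa'⟩ := pairAt k l hl hkl S p hp
  obtain ⟨b, r₂, hbr2, hbr2', hpb, hpb'⟩ := pairAt k l hl hkl S q hq
  have hmem : ∀ x : Z2, x ∈ S + Tset k l ↔ toR x ∈ C := by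
    intro x
    rw [hK]; rfl
  have hhr2 : h ≤ r₂ := by omega
  rcases eq_or_lt_of_le hhr2 with rfl | hhr2'
  · exact ⟨(b, h), hpb, rfl⟩
  · obtain ⟨m, hm⟩ := keyConv C hC a b r₁ r₂ h (by omega) hhr2'
      ((hmem _).mp hpa) ((hmem _).mp hpa') ((hmem _).mp hpb) ((hmem _).mp hpb')
    exact ⟨(m, h), (hmem _).mpr hm, rfl⟩
end
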